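/- arXiv:1807.11383 — 3 statements merged into one kernel-verified Lean document; each statement's English description precedes it below -/
import Mathlib

section
/- For every integer n ≥ 3, the number of simple biased graphs with vertex set [n] satisfies |B_n| ≥ 2^{(1/2)(n-1)!}. -/
open SimpleGraph

/-- A cycle of a graph `G`: a connected, 2-regular subgraph. -/
def IsCycleSubgraph {V : Type*} (G : SimpleGraph V) (C : G.Subgraph) : Prop :=
  C.Connected ∧ ∀ v ∈ C.verts, (C.neighborSet v).ncard = 2

/-- A theta-subgraph of `G`: the union of three internally disjoint paths
joining two distinct vertices. -/
def IsThetaSubgraph {V : Type*} (G : SimpleGraph V) (H : G.Subgraph) : Prop :=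
  ∃ (u v : V) (p₁ p₂ p₃ : G.Walk u v),
    u ≠ v ∧ p₁.IsPath ∧ p₂.IsPath ∧ p₃.IsPath ∧
    p₁ ≠ p₂ ∧ p₁ ≠ p₃ ∧ p₂ ≠ p₃ ∧
    {x | x ∈ p₁.support} ∩ {x | x ∈ p₂.support} = {u, v} ∧
    {x | x ∈ p₁.support} ∩ {x | x ∈ p₃.support} = {u, v} ∧
    {x | x ∈ p₂.support} ∩ {x | x ∈ p₃.support} = {u, v} ∧
    H = p₁.toSubgraph ⊔ p₂.toSubgraph ⊔ p₃.toSubgraph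

/-- `(G, B)` is a biased graph: `B` is a set of cycles of `G` such that no
theta-subgraph of `G` contains precisely two cycles belonging to `B`. -/
def IsBiasedGraph {V : Type*} (G : SimpleGraph V) (B : Set G.Subgraph) : Prop :=
  (∀ C ∈ B, IsCycleSubgraph G C) ∧
  ∀ H : G.Subgraph, IsThetaSubgraph G H → ({C ∈ B | C ≤ H} : Set G.Subgraph).ncard ≠ 2

/-- The number of simple biased graphs with vertex set `[n]`. -/
noncomputable def biasedGraphCount (n : ℕ) : ℕ :=
  Nat.card {p : Σ G : SimpleGraph (Fin n), Set G.Subgraph // IsBiasedGraph p.1 p.2}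

namespace BiasedAux
variable {V : Type*} {G : SimpleGraph V}

lemma support_getElem_eq_getVert {u v : V} (p : G.Walk u v) :
    ∀ (i : ℕ) (h : i < p.support.length), p.support[i] = p.getVert i := by
  induction p with
  | nil =>
    intro i h
    simp only [Walk.support_nil, List.length_singleton] at h
    rcases Nat.lt_one_iff.mp h with rfl
    simp
  | cons ha q ih =>
    intro i h
    cases i with
    | zero => simp
    | succ j =>
      simp only [Walk.support_cons, List.getElem_cons_succ, Walk.getVert_cons_succ]
      exact ih j (by simpa [Walk.support_cons] using h)

lemma getVert_internal_ne {u v : V} {p : G.Walk u v} (hp : p.IsPath) {i : ℕ}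
    (h0 : 0 < i) (hl : i < p.length) : p.getVert i ≠ u ∧ p.getVert i ≠ v := by
  have nd := hp.support_nodup
  have hlen := p.length_support
  have h1 : i < p.support.length := by omega
  have h2 : 0 < p.support.length := by omega
  have h3 : p.length < p.support.length := by omega
  constructor
  · intro h
    have : p.support[i] = p.support[0] := by
      rw [support_getElem_eq_getVert p i h1, support_getElem_eq_getVert p 0 h2]
      simpa using h
    have := (nd.getElem_inj_iff).mp this
    omega
  · intro h
    have : p.support[i] = p.support[p.length] := by
      rw [support_getElem_eq_getVert p i h1, support_getElem_eq_getVert p p.length h3]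
      simpa [Walk.getVert_length] using h
    have := (nd.getElem_inj_iff).mp this
    omega

lemma getVert_mem_support {u v : V} (p : G.Walk u v) (i : ℕ) :
    p.getVert i ∈ p.support := by
  by_cases h : i < p.support.length
  · rw [← support_getElem_eq_getVert p i h]; exact p.support.getElem_mem h
  · have : p.length ≤ i := by have := p.length_support; omega
    rw [p.getVert_of_length_le this]
    exact p.end_mem_support

lemma ncard_neighborSet_path_le {u v : V} {p : G.Walk u v} (hp : p.IsPath) (w : V) :
    (p.toSubgraph.neighborSet w).ncard ≤ 2 := by
  by_cases hw : ∃ j, j < p.support.length ∧ p.getVert j = w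
  · obtain ⟨j, hj, rfl⟩ := hw
    have hsub : p.toSubgraph.neighborSet (p.getVert j) ⊆
        {p.getVert (j - 1), p.getVert (j + 1)} := by
      intro x hx
      rw [Subgraph.mem_neighborSet, Walk.toSubgraph_adj_iff] at hx
      obtain ⟨i, hi, hil⟩ := hx
      have hlen := p.length_support
      rw [Sym2.eq_iff] at hi
      rcases hi with ⟨hi1, hi2⟩ | ⟨hi1, hi2⟩
      · -- getVert i = getVert j, getVert (i+1) = x
        have : p.support[i]'(by omega) = p.support[j]'(by omega) := by
          rw [support_getElem_eq_getVert, support_getElem_eq_getVert]; exact hi1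
        have hij := (hp.support_nodup.getElem_inj_iff).mp this
        subst hij
        right; rw [← hi2]; rfl
      · -- getVert (i+1) = getVert j, getVert i = x
        have : p.support[i+1]'(by omega) = p.support[j]'(by omega) := by
          rw [support_getElem_eq_getVert, support_getElem_eq_getVert]; exact hi2
        have hij := (hp.support_nodup.getElem_inj_iff).mp this
        left; rw [← hi1, ← hij]; simp
    calc (p.toSubgraph.neighborSet (p.getVert j)).ncard
        ≤ ({p.getVert (j - 1), p.getVert (j + 1)} : Set V).ncard :=
          Set.ncard_le_ncard hsub (Set.toFinite _)
      _ ≤ 2 := by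
          apply le_trans (Set.ncard_insert_le _ _); simp
  · have : p.toSubgraph.neighborSet w = ∅ := by
      ext x
      simp only [Set.mem_empty_iff_false, iff_false, Subgraph.mem_neighborSet]
      intro hx
      rw [Walk.toSubgraph_adj_iff] at hx
      obtain ⟨i, hi, hil⟩ := hx
      have hlen := p.length_support
      rw [Sym2.eq_iff] at hi
      rcases hi with ⟨hi1, _⟩ | ⟨_, hi2⟩
      · exact hw ⟨i, by omega, hi1⟩
      · exact hw ⟨i + 1, by omega, hi2⟩
    simp [this]


lemma path_edges_subset {u v : V} {p : G.Walk u v} (hp : p.IsPath) (hlen : 2 ≤ p.length)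
    {C : G.Subgraph}
    (hnb : ∀ w, w ∈ p.support → w ≠ u → w ≠ v →
      C.neighborSet w = p.toSubgraph.neighborSet w) :
    ∀ a b, p.toSubgraph.Adj a b → C.Adj a b := by
  intro a b hadj
  rw [Walk.toSubgraph_adj_iff] at hadj
  obtain ⟨i, hsym, hi⟩ := hadj
  have key : C.Adj (p.getVert i) (p.getVert (i + 1)) := by
    cases i with
    | zero =>
      have hint := getVert_internal_ne hp (i := 1) one_pos (by omega)
      have h01 : p.getVert 0 ∈ p.toSubgraph.neighborSet (p.getVert 1) :=
        (Walk.toSubgraph_adj_getVert p (by omega : 0 < p.length)).symm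
      have := hnb (p.getVert 1) (getVert_mem_support p 1) hint.1 hint.2
      have : p.getVert 0 ∈ C.neighborSet (p.getVert 1) := this ▸ h01
      exact (Subgraph.mem_neighborSet _ _ _ |>.mp this).symm
    | succ j =>
      have hint := getVert_internal_ne hp (i := j + 1) (Nat.succ_pos j) hi
      have h01 : p.getVert (j + 2) ∈ p.toSubgraph.neighborSet (p.getVert (j + 1)) :=
        Walk.toSubgraph_adj_getVert p hi
      have := hnb (p.getVert (j + 1)) (getVert_mem_support p (j + 1)) hint.1 hint.2
      have : p.getVert (j + 2) ∈ C.neighborSet (p.getVert (j + 1)) := this ▸ h01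
      exact Subgraph.mem_neighborSet _ _ _ |>.mp this
  rw [Sym2.eq_iff] at hsym
  rcases hsym with ⟨rfl, rfl⟩ | ⟨rfl, rfl⟩
  · exact key
  · exact key.symm

lemma nbEq {u v : V} (q r s : G.Walk u v) (hq : q.IsPath)
    (hqr : {x | x ∈ q.support} ∩ {x | x ∈ r.support} = {u, v})
    (hqs : {x | x ∈ q.support} ∩ {x | x ∈ s.support} = {u, v})
    {C : G.Subgraph}
    (hCadj : ∀ w x, C.Adj w x →
      q.toSubgraph.Adj w x ∨ r.toSubgraph.Adj w x ∨ s.toSubgraph.Adj w x)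
    (hreg : ∀ w, (C.neighborSet w).ncard = 2)
    {w : V} (hw : w ∈ q.support) (hwu : w ≠ u) (hwv : w ≠ v) :
    C.neighborSet w = q.toSubgraph.neighborSet w := by
  have hnr : w ∉ r.support := by
    intro h
    have : w ∈ ({u, v} : Set V) := hqr ▸ ⟨hw, h⟩
    rcases this with h' | h' <;> simp_all
  have hns : w ∉ s.support := by
    intro h
    have : w ∈ ({u, v} : Set V) := hqs ▸ ⟨hw, h⟩
    rcases this with h' | h' <;> simp_all
  apply Set.eq_of_subset_of_ncard_le
  · intro x hx
    rw [Subgraph.mem_neighborSet] at hx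
    rcases hCadj w x hx with h' | h' | h'
    · exact h'
    · exact absurd (by simpa using r.toSubgraph.edge_vert h') hnr
    · exact absurd (by simpa using s.toSubgraph.edge_vert h') hns
  · rw [hreg w]; exact ncard_neighborSet_path_le hq w
  · exact Walk.finite_neighborSet_toSubgraph q

lemma core {u v : V} (huv : u ≠ v) (q1 q2 q3 : G.Walk u v)
    (h1 : q1.IsPath) (h2 : q2.IsPath) (h3 : q3.IsPath)
    (s12 : {x | x ∈ q1.support} ∩ {x | x ∈ q2.support} = {u, v})
    (s13 : {x | x ∈ q1.support} ∩ {x | x ∈ q3.support} = {u, v})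
    (s23 : {x | x ∈ q2.support} ∩ {x | x ∈ q3.support} = {u, v})
    (l1 : 2 ≤ q1.length) (l2 : 2 ≤ q2.length)
    {C : G.Subgraph}
    (hCH : C ≤ q1.toSubgraph ⊔ q2.toSubgraph ⊔ q3.toSubgraph)
    (hreg : ∀ w, (C.neighborSet w).ncard = 2) :
    ∀ a b, C.Adj a b ↔ (q1.toSubgraph.Adj a b ∨ q2.toSubgraph.Adj a b) := by
  have hA : ∀ w x, C.Adj w x →
      q1.toSubgraph.Adj w x ∨ q2.toSubgraph.Adj w x ∨ q3.toSubgraph.Adj w x := by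
    intro w x h
    have := hCH.2 h
    rw [Subgraph.sup_adj, Subgraph.sup_adj] at this
    tauto
  have s21 : {x | x ∈ q2.support} ∩ {x | x ∈ q1.support} = {u, v} := by
    rw [Set.inter_comm]; exact s12
  have s31 : {x | x ∈ q3.support} ∩ {x | x ∈ q1.support} = {u, v} := by
    rw [Set.inter_comm]; exact s13
  have s32 : {x | x ∈ q3.support} ∩ {x | x ∈ q2.support} = {u, v} := by
    rw [Set.inter_comm]; exact s23
  have hE1 : ∀ a b, q1.toSubgraph.Adj a b → C.Adj a b :=
    path_edges_subset h1 l1 (fun w hw hwu hwv =>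
      nbEq q1 q2 q3 h1 s12 s13 hA hreg hw hwu hwv)
  have hE2 : ∀ a b, q2.toSubgraph.Adj a b → C.Adj a b :=
    path_edges_subset h2 l2 (fun w hw hwu hwv =>
      nbEq q2 q1 q3 h2 s21 s23 (fun w x h => by have := hA w x h; tauto) hreg hw hwu hwv)
  have hCfin : (C.neighborSet u).Finite := by
    apply Set.Finite.subset (Set.Finite.union (Set.Finite.union
      (Walk.finite_neighborSet_toSubgraph q1 (w := u))
      (Walk.finite_neighborSet_toSubgraph q2 (w := u)))
      (Walk.finite_neighborSet_toSubgraph q3 (w := u)))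
    intro x hx
    rw [Subgraph.mem_neighborSet] at hx
    rcases hA u x hx with h | h | h
    · exact Or.inl (Or.inl h)
    · exact Or.inl (Or.inr h)
    · exact Or.inr h
  have hx1i := getVert_internal_ne h1 (i := 1) one_pos (by omega)
  have hx2i := getVert_internal_ne h2 (i := 1) one_pos (by omega)
  have hx1 : C.Adj u (q1.getVert 1) := by
    have := hE1 (q1.getVert 0) (q1.getVert 1) (Walk.toSubgraph_adj_getVert q1 (by omega))
    simpa [Walk.getVert_zero] using this
  have hx2 : C.Adj u (q2.getVert 1) := by
    have := hE2 (q2.getVert 0) (q2.getVert 1) (Walk.toSubgraph_adj_getVert q2 (by omega))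
    simpa [Walk.getVert_zero] using this
  have hx12 : q1.getVert 1 ≠ q2.getVert 1 := by
    intro h
    have : q1.getVert 1 ∈ ({u, v} : Set V) :=
      s12 ▸ ⟨getVert_mem_support q1 1, h ▸ getVert_mem_support q2 1⟩
    rcases this with h' | h' <;> simp_all
  have key3 : ∀ y, C.Adj u y → y ≠ q1.getVert 1 → y ≠ q2.getVert 1 → False := by
    intro y hy hy1 hy2
    have hsub : ({y, q1.getVert 1, q2.getVert 1} : Set V) ⊆ C.neighborSet u := by
      rintro z (rfl | rfl | rfl)
      · exact hy
      · exact hx1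
      · exact hx2
    have hle : ({y, q1.getVert 1, q2.getVert 1} : Set V).ncard ≤ 2 := by
      rw [← hreg u]; exact Set.ncard_le_ncard hsub hCfin
    have heq : ({y, q1.getVert 1, q2.getVert 1} : Set V).ncard = 3 := by
      rw [Set.ncard_insert_of_notMem (by simp [hy1, hy2]) (Set.toFinite _),
        Set.ncard_pair hx12]
    omega
  by_cases hq3 : 2 ≤ q3.length
  · exfalso
    have hx3i := getVert_internal_ne h3 (i := 1) one_pos (by omega)
    have hE3 : ∀ a b, q3.toSubgraph.Adj a b → C.Adj a b :=
      path_edges_subset h3 hq3 (fun w hw hwu hwv =>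
        nbEq q3 q1 q2 h3 s31 s32 (fun w x h => by have := hA w x h; tauto) hreg hw hwu hwv)
    have hx3 : C.Adj u (q3.getVert 1) := by
      have := hE3 (q3.getVert 0) (q3.getVert 1) (Walk.toSubgraph_adj_getVert q3 (by omega))
      simpa [Walk.getVert_zero] using this
    have hx13 : q3.getVert 1 ≠ q1.getVert 1 := by
      intro h
      have : q3.getVert 1 ∈ ({u, v} : Set V) :=
        s13 ▸ ⟨by rw [h]; exact getVert_mem_support q1 1, getVert_mem_support q3 1⟩
      rcases this with h' | h' <;> simp_all
    have hx23 : q3.getVert 1 ≠ q2.getVert 1 := by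
      intro h
      have : q3.getVert 1 ∈ ({u, v} : Set V) :=
        s23 ▸ ⟨by rw [h]; exact getVert_mem_support q2 1, getVert_mem_support q3 1⟩
      rcases this with h' | h' <;> simp_all
    exact key3 _ hx3 hx13 hx23
  · -- q3 has length 1
    have hlen3 : q3.length = 1 := by
      have : q3.length ≠ 0 := fun h => huv (Walk.eq_of_length_eq_zero h)
      omega
    have hnuv : ¬ C.Adj u v := by
      intro h
      exact key3 v h (Ne.symm hx1i.2) (Ne.symm hx2i.2)
    intro a b
    constructor
    · intro h
      rcases hA a b h with h' | h' | h'
      · exact Or.inl h'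
      · exact Or.inr h'
      · exfalso
        rw [Walk.toSubgraph_adj_iff] at h'
        obtain ⟨i, hsym, hi⟩ := h'
        have hi0 : i = 0 := by omega
        subst hi0
        rw [Walk.getVert_zero, show q3.getVert 1 = v from
          q3.getVert_of_length_le (by omega)] at hsym
        rw [Sym2.eq_iff] at hsym
        rcases hsym with ⟨rfl, rfl⟩ | ⟨rfl, rfl⟩
        · exact hnuv h
        · exact hnuv h.symm
    · rintro (h | h)
      · exact hE1 a b h
      · exact hE2 a b h


lemma walk_length_le_one_eq {u v : V} (huv : u ≠ v) (p q : G.Walk u v)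
    (hp : p.length ≤ 1) (hq : q.length ≤ 1) : p = q := by
  have key : ∀ (r : G.Walk u v), r.length ≤ 1 →
      ∃ h : G.Adj u v, r = Walk.cons h Walk.nil := by
    intro r hr
    cases r with
    | nil => exact absurd rfl huv
    | cons h q' =>
      cases q' with
      | nil => exact ⟨h, rfl⟩
      | cons h' q'' => simp [Walk.length_cons] at hr
  obtain ⟨hadj, rfl⟩ := key p hp
  obtain ⟨hadj', rfl⟩ := key q hq
  rfl

lemma theta_unique {H : G.Subgraph} (ht : IsThetaSubgraph G H) {C1 C2 : G.Subgraph}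
    (hreg1 : ∀ w, (C1.neighborSet w).ncard = 2) (hv1 : C1.verts = Set.univ)
    (hreg2 : ∀ w, (C2.neighborSet w).ncard = 2) (hv2 : C2.verts = Set.univ)
    (hle1 : C1 ≤ H) (hle2 : C2 ≤ H) : C1 = C2 := by
  obtain ⟨u, v, p1, p2, p3, huv, hp1, hp2, hp3, h12, h13, h23, s12, s13, s23, rfl⟩ := ht
  have s21 : {x | x ∈ p2.support} ∩ {x | x ∈ p1.support} = {u, v} := by
    rw [Set.inter_comm]; exact s12
  have s31 : {x | x ∈ p3.support} ∩ {x | x ∈ p1.support} = {u, v} := by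
    rw [Set.inter_comm]; exact s13
  have s32 : {x | x ∈ p3.support} ∩ {x | x ∈ p2.support} = {u, v} := by
    rw [Set.inter_comm]; exact s23
  have main : ∀ a b, C1.Adj a b ↔ C2.Adj a b := by
    by_cases l1 : 2 ≤ p1.length
    · by_cases l2 : 2 ≤ p2.length
      · intro a b
        rw [core huv p1 p2 p3 hp1 hp2 hp3 s12 s13 s23 l1 l2 hle1 hreg1 a b,
          core huv p1 p2 p3 hp1 hp2 hp3 s12 s13 s23 l1 l2 hle2 hreg2 a b]
      · by_cases l3 : 2 ≤ p3.length
        · have hle1' : C1 ≤ p1.toSubgraph ⊔ p3.toSubgraph ⊔ p2.toSubgraph := by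
            rwa [sup_right_comm] at hle1
          have hle2' : C2 ≤ p1.toSubgraph ⊔ p3.toSubgraph ⊔ p2.toSubgraph := by
            rwa [sup_right_comm] at hle2
          intro a b
          rw [core huv p1 p3 p2 hp1 hp3 hp2 s13 s12 s32 l1 l3 hle1' hreg1 a b,
            core huv p1 p3 p2 hp1 hp3 hp2 s13 s12 s32 l1 l3 hle2' hreg2 a b]
        · exact absurd (walk_length_le_one_eq huv p2 p3 (by omega) (by omega)) h23
    · have l2 : 2 ≤ p2.length := by
        by_contra h
        exact h12 (walk_length_le_one_eq huv p1 p2 (by omega) (by omega))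
      have l3 : 2 ≤ p3.length := by
        by_contra h
        exact h13 (walk_length_le_one_eq huv p1 p3 (by omega) (by omega))
      have hle1' : C1 ≤ p2.toSubgraph ⊔ p3.toSubgraph ⊔ p1.toSubgraph := by
        rwa [sup_comm p1.toSubgraph p2.toSubgraph, sup_right_comm] at hle1
      have hle2' : C2 ≤ p2.toSubgraph ⊔ p3.toSubgraph ⊔ p1.toSubgraph := by
        rwa [sup_comm p1.toSubgraph p2.toSubgraph, sup_right_comm] at hle2
      intro a b
      rw [core huv p2 p3 p1 hp2 hp3 hp1 s23 s21 s31 l2 l3 hle1' hreg1 a b,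
        core huv p2 p3 p1 hp2 hp3 hp1 s23 s21 s31 l2 l3 hle2' hreg2 a b]
  exact Subgraph.ext (hv1.trans hv2.symm)
    (funext fun a => funext fun b => propext (main a b))


end BiasedAux

namespace BiasedAux
variable {m : ℕ}
open Fin.NatCast Fin.CommRing

def rot (m : ℕ) : Equiv.Perm (Fin (m + 3)) := Equiv.addRight 1

lemma rot_apply (x : Fin (m + 3)) : rot m x = x + 1 := rfl

lemma rot_pow_apply (k : ℕ) (x : Fin (m + 3)) :
    ((rot m) ^ k) x = x + (k : Fin (m + 3)) := by
  induction k generalizing x with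
  | zero => simp
  | succ j ih =>
    have : ((rot m) ^ (j + 1)) x = ((rot m) ^ j) (x + 1) := by
      rw [pow_succ, Equiv.Perm.mul_apply]; rfl
    rw [this, ih (x + 1)]
    push_cast
    ring

lemma two_ne_zero' : (1 + 1 : Fin (m + 3)) ≠ 0 := by
  intro h
  have := congrArg Fin.val h
  rw [Fin.val_add, Fin.val_one, Fin.val_zero, Nat.mod_eq_of_lt (by omega)] at this
  omega

def sigma (e : Equiv.Perm (Fin (m + 3))) : Equiv.Perm (Fin (m + 3)) := e * rot m * e⁻¹

lemma sigma_def (e : Equiv.Perm (Fin (m + 3))) : sigma e = e * rot m * e⁻¹ := rfl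

lemma sigma_pow (e : Equiv.Perm (Fin (m + 3))) (k : ℕ) :
    (sigma e) ^ k = e * (rot m) ^ k * e⁻¹ := by
  induction k with
  | zero => simp
  | succ j ih => rw [pow_succ, ih, sigma, pow_succ]; group

lemma sigma_apply (e : Equiv.Perm (Fin (m + 3))) (x : Fin (m + 3)) :
    sigma e x = e (e⁻¹ x + 1) := rfl

lemma sigma_fp (e : Equiv.Perm (Fin (m + 3))) (x : Fin (m + 3)) : sigma e x ≠ x := by
  intro h
  rw [sigma_apply] at h
  have h2 : e⁻¹ x + 1 = e⁻¹ x :=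
    e.injective (by rw [h]; simp)
  have := add_eq_left.mp h2
  exact one_ne_zero this

lemma sigma_sq_fp (e : Equiv.Perm (Fin (m + 3))) (x : Fin (m + 3)) :
    sigma e (sigma e x) ≠ x := by
  intro h
  rw [sigma_apply, sigma_apply] at h
  simp only [show ∀ y, e⁻¹ (e y) = y from fun y => e.symm_apply_apply y] at h
  have h2 : e⁻¹ x + 1 + 1 = e⁻¹ x :=
    e.injective (by rw [h]; simp)
  rw [add_assoc] at h2
  exact two_ne_zero' (add_eq_left.mp h2)

lemma sigma_trans (e : Equiv.Perm (Fin (m + 3))) (a b : Fin (m + 3)) :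
    ∃ k : ℕ, ((sigma e) ^ k) a = b := by
  refine ⟨(e⁻¹ b - e⁻¹ a).val, ?_⟩
  rw [sigma_pow, Equiv.Perm.mul_apply, Equiv.Perm.mul_apply, rot_pow_apply,
    Fin.cast_val_eq_self]
  have : e⁻¹ a + (e⁻¹ b - e⁻¹ a) = e⁻¹ b := by ring
  rw [this]
  simp

def cyc (σ : Equiv.Perm (Fin (m + 3))) : (⊤ : SimpleGraph (Fin (m + 3))).Subgraph where
  verts := Set.univ
  Adj a b := a ≠ b ∧ (b = σ a ∨ a = σ b)
  adj_sub := fun h => by simpa using h.1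
  edge_vert := fun _ => Set.mem_univ _
  symm := ⟨fun a b h => ⟨h.1.symm, h.2.symm⟩⟩

lemma cyc_adj (σ : Equiv.Perm (Fin (m + 3))) (a b : Fin (m + 3)) :
    (cyc σ).Adj a b ↔ a ≠ b ∧ (b = σ a ∨ a = σ b) := Iff.rfl

lemma cyc_verts (σ : Equiv.Perm (Fin (m + 3))) : (cyc σ).verts = Set.univ := rfl

lemma cyc_nb (σ : Equiv.Perm (Fin (m + 3))) (hfp : ∀ x, σ x ≠ x) (a : Fin (m + 3)) :
    (cyc σ).neighborSet a = {σ a, σ⁻¹ a} := by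
  ext b
  rw [Subgraph.mem_neighborSet, cyc_adj]
  constructor
  · rintro ⟨hne, h | h⟩
    · exact Or.inl h
    · exact Or.inr (Equiv.Perm.eq_inv_iff_eq.mpr h.symm)
  · rintro (rfl | rfl)
    · exact ⟨fun h => hfp a h.symm, Or.inl rfl⟩
    · refine ⟨fun h => hfp a ?_, Or.inr (by simp)⟩
      conv_lhs => rw [h]
      simp
  -- note: second membership form: b = σ a ∨ b = σ⁻¹ a is how {σ a, σ⁻¹ a} unfolds

lemma cyc_nb_card (σ : Equiv.Perm (Fin (m + 3))) (hfp : ∀ x, σ x ≠ x)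
    (h2 : ∀ x, σ (σ x) ≠ x) (a : Fin (m + 3)) :
    ((cyc σ).neighborSet a).ncard = 2 := by
  rw [cyc_nb σ hfp a, Set.ncard_pair]
  intro h
  apply h2 a
  conv_lhs => rw [h]
  simp

lemma cyc_connected (σ : Equiv.Perm (Fin (m + 3))) (hfp : ∀ x, σ x ≠ x)
    (htrans : ∀ a b, ∃ k : ℕ, (σ ^ k) a = b) : (cyc σ).Connected := by
  rw [Subgraph.connected_iff]
  constructor
  · rw [Subgraph.preconnected_iff]
    have step : ∀ (a : Fin (m + 3)) (k : ℕ),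
        (cyc σ).coe.Reachable ⟨a, Set.mem_univ a⟩ ⟨(σ ^ k) a, Set.mem_univ _⟩ := by
      intro a k
      induction k with
      | zero =>
        simp only [pow_zero, Equiv.Perm.one_apply]
        exact Reachable.refl _
      | succ j ih =>
        refine ih.trans (Adj.reachable ?_)
        rw [Subgraph.coe_adj]
        have : (σ ^ (j + 1)) a = σ ((σ ^ j) a) := by
          rw [pow_succ', Equiv.Perm.mul_apply]
        rw [this]
        exact ⟨fun h => hfp _ h.symm, Or.inl rfl⟩
    rintro ⟨a, _⟩ ⟨b, _⟩
    obtain ⟨k, rfl⟩ := htrans a b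
    exact step a k
  · exact ⟨0, Set.mem_univ 0⟩

lemma half {σ τ : Equiv.Perm (Fin (m + 3))}
    (hAdj : ∀ a, τ a = σ a ∨ a = σ (τ a))
    (hτ2 : ∀ x, τ (τ x) ≠ x)
    (hσtrans : ∀ a b, ∃ k : ℕ, (σ ^ k) a = b)
    (h0 : τ 0 = σ 0) : τ = σ := by
  have step : ∀ x, τ x = σ x → τ (σ x) = σ (σ x) := by
    intro x hx
    rcases hAdj (σ x) with h | h
    · exact h
    · exfalso
      apply hτ2 x
      have hx2 : x = τ (σ x) := σ.injective h
      rw [hx, ← hx2]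
  have all : ∀ k : ℕ, τ ((σ ^ k) 0) = σ ((σ ^ k) 0) := by
    intro k
    induction k with
    | zero => simpa using h0
    | succ j ih =>
      have : (σ ^ (j + 1)) (0 : Fin (m + 3)) = σ ((σ ^ j) 0) := by
        rw [pow_succ', Equiv.Perm.mul_apply]
      rw [this]
      exact step _ ih
  apply Equiv.ext
  intro b
  obtain ⟨k, rfl⟩ := hσtrans 0 b
  exact all k

lemma cyc_inv (σ : Equiv.Perm (Fin (m + 3))) : cyc σ⁻¹ = cyc σ := by
  refine Subgraph.ext rfl ?_
  funext a b
  apply propext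
  rw [cyc_adj, cyc_adj]
  constructor
  · rintro ⟨hne, h | h⟩
    · exact ⟨hne, Or.inr (Equiv.Perm.eq_inv_iff_eq.mp h).symm⟩
    · exact ⟨hne, Or.inl (Equiv.Perm.eq_inv_iff_eq.mp h).symm⟩
  · rintro ⟨hne, h | h⟩
    · exact ⟨hne, Or.inr (Equiv.Perm.eq_inv_iff_eq.mpr h.symm)⟩
    · exact ⟨hne, Or.inl (Equiv.Perm.eq_inv_iff_eq.mpr h.symm)⟩

lemma rigid {σ τ : Equiv.Perm (Fin (m + 3))}
    (hτfp : ∀ x, τ x ≠ x) (hτ2 : ∀ x, τ (τ x) ≠ x)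
    (hσtrans : ∀ a b, ∃ k : ℕ, (σ ^ k) a = b)
    (hcyc : cyc τ = cyc σ) : τ = σ ∨ τ = σ⁻¹ := by
  have hAdj : ∀ a, τ a = σ a ∨ a = σ (τ a) := by
    intro a
    have h1 : (cyc τ).Adj a (τ a) := ⟨fun h => hτfp a h.symm, Or.inl rfl⟩
    rw [hcyc, cyc_adj] at h1
    exact h1.2
  by_cases h0 : τ 0 = σ 0
  · exact Or.inl (half hAdj hτ2 hσtrans h0)
  · right
    have hAdj' : ∀ a, τ a = σ⁻¹ a ∨ a = σ⁻¹ (τ a) := by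
      intro a
      have h1 : (cyc τ).Adj a (τ a) := ⟨fun h => hτfp a h.symm, Or.inl rfl⟩
      rw [hcyc, ← cyc_inv, cyc_adj] at h1
      exact h1.2
    have hσ'trans : ∀ a b, ∃ k : ℕ, (σ⁻¹ ^ k) a = b := by
      intro a b
      obtain ⟨k, hk⟩ := hσtrans b a
      refine ⟨k, ?_⟩
      rw [inv_pow, Equiv.Perm.inv_eq_iff_eq, hk]
    have h0' : τ 0 = σ⁻¹ 0 := by
      rcases hAdj 0 with h | h
      · exact absurd h h0
      · exact Equiv.Perm.eq_inv_iff_eq.mpr h.symm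
    exact half hAdj' hτ2 hσ'trans h0'


-- embedding of small permutations
def emb (g : Equiv.Perm (Fin (m + 2))) : Equiv.Perm (Fin (m + 3)) :=
  Equiv.Perm.decomposeFin.symm (0, g)

lemma emb_zero (g : Equiv.Perm (Fin (m + 2))) : emb g 0 = 0 :=
  Equiv.Perm.decomposeFin_symm_apply_zero 0 g

lemma emb_injective : Function.Injective (emb (m := m)) := by
  intro g h hgh
  have := Equiv.Perm.decomposeFin.symm.injective hgh
  exact (Prod.ext_iff.mp this).2

def nu (m : ℕ) : Equiv.Perm (Fin (m + 3)) := Equiv.neg (Fin (m + 3))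

lemma nu_apply (x : Fin (m + 3)) : nu m x = -x := rfl

lemma nu_inv : (nu m)⁻¹ = nu m := by
  apply Equiv.ext
  intro y
  rw [Equiv.Perm.inv_eq_iff_eq]
  simp [nu_apply]

lemma comm_rot {π : Equiv.Perm (Fin (m + 3))} (h : π * rot m = rot m * π) :
    ∀ x, π x = x + π 0 := by
  have hstep : ∀ x : Fin (m + 3), π (x + 1) = π x + 1 := by
    intro x
    have h' := congrArg (fun (f : Equiv.Perm (Fin (m + 3))) => f x) h
    simpa [Equiv.Perm.mul_apply, rot_apply] using h'
  have hnat : ∀ j : ℕ, π ((j : Fin (m + 3))) = π 0 + j := by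
    intro j
    induction j with
    | zero => simp
    | succ i ih =>
      push_cast
      rw [hstep, ih]
      ring
  intro x
  have := hnat x.val
  rw [Fin.cast_val_eq_self] at this
  rw [this]
  ring

lemma conj_eq {e f : Equiv.Perm (Fin (m + 3))} (he : e 0 = 0) (hf : f 0 = 0)
    (h : e * rot m * e⁻¹ = f * rot m * f⁻¹) : e = f := by
  have hcomm : (f⁻¹ * e) * rot m = rot m * (f⁻¹ * e) := by
    have h1 : e * rot m = f * rot m * f⁻¹ * e := by
      rw [← h]; group
    calc (f⁻¹ * e) * rot m = f⁻¹ * (e * rot m) := by group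
      _ = f⁻¹ * (f * rot m * f⁻¹ * e) := by rw [h1]
      _ = rot m * (f⁻¹ * e) := by group
  have hpt := comm_rot hcomm
  have h0 : (f⁻¹ * e) 0 = 0 := by
    rw [Equiv.Perm.mul_apply, he, Equiv.Perm.inv_eq_iff_eq, hf]
  apply Equiv.ext
  intro x
  have hx := hpt x
  rw [h0, add_zero] at hx
  have hx' : f⁻¹ (e x) = x := hx
  rw [Equiv.Perm.inv_eq_iff_eq] at hx'
  exact hx'

lemma nu_rot : (nu m) * rot m * (nu m)⁻¹ = (rot m)⁻¹ := by
  apply Equiv.ext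
  intro x
  have hr : (rot m)⁻¹ x = x - 1 := by
    rw [Equiv.Perm.inv_eq_iff_eq, rot_apply]
    ring
  rw [hr, nu_inv, Equiv.Perm.mul_apply, Equiv.Perm.mul_apply, nu_apply, rot_apply, nu_apply]
  ring

lemma fiber_two {g h : Equiv.Perm (Fin (m + 2))}
    (hgh : cyc (sigma (emb g)) = cyc (sigma (emb h))) :
    g = h ∨ emb g = emb h * nu m := by
  rcases rigid (sigma_fp (emb g)) (sigma_sq_fp (emb g)) (sigma_trans (emb h)) hgh with
    h1 | h1
  · left
    exact emb_injective (conj_eq (emb_zero g) (emb_zero h) h1)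
  · right
    have hconj : (sigma (emb h))⁻¹ = (emb h * nu m) * rot m * (emb h * nu m)⁻¹ := by
      have h2 : (sigma (emb h))⁻¹ = emb h * (rot m)⁻¹ * (emb h)⁻¹ := by
        rw [sigma_def]; group
      rw [h2, ← nu_rot]
      group
    refine conj_eq (emb_zero g) ?_ (by rw [← sigma_def, h1, hconj])
    rw [Equiv.Perm.mul_apply, nu_apply, neg_zero, emb_zero]


end BiasedAux

open BiasedAux in
/-- For every `n ≥ 3`, `|B_n| ≥ 2 ^ ((1/2)(n-1)!)`. -/
theorem biasedGraphCount_lower_bound (n : ℕ) (hn : 3 ≤ n) :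
    (2 : ℝ) ^ (((n - 1).factorial : ℝ) / 2) ≤ (biasedGraphCount n : ℝ) := by
  classical
  obtain ⟨m, rfl⟩ : ∃ m, n = m + 3 := ⟨n - 3, by omega⟩
  set S : Finset ((⊤ : SimpleGraph (Fin (m + 3))).Subgraph) :=
    Finset.image (fun g => cyc (sigma (emb g))) Finset.univ with hS
  -- fiber bound
  have hcount : (m + 2).factorial ≤ 2 * S.card := by
    have := Finset.card_le_mul_card_image (f := fun g : Equiv.Perm (Fin (m + 2)) => cyc (sigma (emb g)))
      Finset.univ 2 ?_
    · simpa [Fintype.card_perm, Fintype.card_fin] using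
        le_trans (le_of_eq (by simp [Fintype.card_perm, Fintype.card_fin])) this
    · intro A hA
      obtain ⟨g0, _, hg0⟩ := Finset.mem_image.mp hA
      have : (Finset.univ.filter fun x => cyc (sigma (emb x)) = A).card ≤
          (Finset.univ : Finset Bool).card := by
        apply Finset.card_le_card_of_injOn (fun g => decide (g = g0))
        · intro a _; exact Finset.mem_univ _
        · intro a ha b hb hab
          simp only [Finset.coe_filter, Set.mem_setOf_eq] at ha hb
          have ha2 := fiber_two (m := m) (ha.2.trans hg0.symm)
          have hb2 := fiber_two (m := m) (hb.2.trans hg0.symm)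
          by_cases hag : a = g0 <;> by_cases hbg : b = g0
          · rw [hag, hbg]
          · exfalso; simp [hag, hbg] at hab
          · exfalso; simp [hag, hbg] at hab
          · rcases ha2 with h1 | h1
            · exact absurd h1 hag
            · rcases hb2 with h2 | h2
              · exact absurd h2 hbg
              · exact emb_injective (h1.trans h2.symm)
      simpa using this
  -- properties of family members
  have hfam : ∀ A ∈ S, A.verts = Set.univ ∧ (∀ w, (A.neighborSet w).ncard = 2) ∧
      IsCycleSubgraph ⊤ A := by
    intro A hA
    obtain ⟨g, _, rfl⟩ := Finset.mem_image.mp hA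
    refine ⟨cyc_verts _, fun w => cyc_nb_card _ (sigma_fp _) (sigma_sq_fp _) w, ?_⟩
    exact ⟨cyc_connected _ (sigma_fp _) (sigma_trans _),
      fun v _ => cyc_nb_card _ (sigma_fp _) (sigma_sq_fp _) v⟩
  -- any subfamily is biased
  have hbiased : ∀ B : Set ((⊤ : SimpleGraph (Fin (m + 3))).Subgraph),
      (∀ C ∈ B, C ∈ S) → IsBiasedGraph ⊤ B := by
    intro B hB
    refine ⟨fun C hC => (hfam C (hB C hC)).2.2, fun H hH => ?_⟩
    have hss : ({C ∈ B | C ≤ H} : Set _).Subsingleton := by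
      rintro C1 ⟨hC1, hle1⟩ C2 ⟨hC2, hle2⟩
      obtain ⟨hv1, hr1, -⟩ := hfam C1 (hB C1 hC1)
      obtain ⟨hv2, hr2, -⟩ := hfam C2 (hB C2 hC2)
      exact theta_unique hH hr1 hv1 hr2 hv2 hle1 hle2
    rcases hss.eq_empty_or_singleton with h | ⟨a, h⟩ <;> rw [h] <;> simp
  -- injection into biased graphs
  haveI : Finite (SimpleGraph (Fin (m + 3))) :=
    Finite.of_injective (fun G => G.Adj) fun a b h => SimpleGraph.ext h
  haveI hfinSub : ∀ G : SimpleGraph (Fin (m + 3)), Finite G.Subgraph := fun G =>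
    Finite.of_injective (fun H => (H.verts, H.Adj))
      (fun a b h => SimpleGraph.Subgraph.ext (Prod.ext_iff.mp h).1 (Prod.ext_iff.mp h).2)
  haveI : Finite {p : Σ G : SimpleGraph (Fin (m + 3)), Set G.Subgraph //
      IsBiasedGraph p.1 p.2} := by
    haveI : ∀ G : SimpleGraph (Fin (m + 3)), Finite (Set G.Subgraph) := fun G => by infer_instance
    infer_instance
  have hinj : Function.Injective
      (fun B : Set {C // C ∈ S} =>
        (⟨⟨⊤, Subtype.val '' B⟩, hbiased _ (by rintro C ⟨D, hD, rfl⟩; exact D.2)⟩ :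
          {p : Σ G : SimpleGraph (Fin (m + 3)), Set G.Subgraph // IsBiasedGraph p.1 p.2})) := by
    intro B1 B2 h
    have h2 := congrArg Subtype.val h
    simp only [Sigma.mk.inj_iff, heq_eq_eq, true_and] at h2
    exact Set.image_injective.mpr Subtype.val_injective h2
  have hcard : 2 ^ S.card ≤ biasedGraphCount (m + 3) := by
    rw [biasedGraphCount]
    calc 2 ^ S.card = Nat.card (Set {C // C ∈ S}) := by
          rw [Nat.card_eq_fintype_card, Fintype.card_set, Fintype.card_coe]
      _ ≤ _ := Nat.card_le_card_of_injective _ hinj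
  -- wrap up numerically
  have hsub : (m + 3 - 1) = m + 2 := rfl
  rw [hsub]
  have step1 : (2 : ℝ) ^ (((m + 2).factorial : ℝ) / 2) ≤ (2 : ℝ) ^ (S.card : ℝ) := by
    apply Real.rpow_le_rpow_of_exponent_le one_le_two
    rw [div_le_iff₀ (by norm_num : (0 : ℝ) < 2)]
    calc ((m + 2).factorial : ℝ) ≤ ((2 * S.card : ℕ) : ℝ) := by exact_mod_cast hcount
      _ = (S.card : ℝ) * 2 := by push_cast; ring
  calc (2 : ℝ) ^ (((m + 2).factorial : ℝ) / 2) ≤ (2 : ℝ) ^ (S.card : ℝ) := step1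
    _ = ((2 ^ S.card : ℕ) : ℝ) := by
        rw [Real.rpow_natCast]; push_cast; ring
    _ ≤ (biasedGraphCount (m + 3) : ℝ) := by exact_mod_cast hcard
end

section
/- For every integer n ≥ 5, the quantity S_n = Σ_{k=0}^{n-3} 1/(k!·(n-k)) satisfies e/n < S_n < e/n + 5/n², where e is Euler's number. -/
open Finset

lemma aux1 (m : ℕ) : ∑ k ∈ Finset.range m, 1 / (k.factorial : ℝ) ≤ Real.exp 1 := by
  have h := Real.sum_le_exp_of_nonneg (by norm_num : (0:ℝ) ≤ 1) m
  simpa using h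

lemma aux2 (m : ℕ) : ∑ k ∈ Finset.range m, (k : ℝ) / k.factorial ≤ Real.exp 1 := by
  rcases m with _ | m
  · simpa using (Real.exp_pos 1).le
  · rw [Finset.sum_range_succ']
    have h : ∀ i ∈ Finset.range m, ((i+1 : ℕ) : ℝ) / ((i+1).factorial : ℝ)
        = 1 / (i.factorial : ℝ) := by
      intro i _
      rw [Nat.factorial_succ]
      have h2 : (i.factorial : ℝ) ≠ 0 := by positivity
      push_cast
      field_simp
    rw [Finset.sum_congr rfl h]
    simpa using aux1 m

lemma aux3 (m : ℕ) : ∑ k ∈ Finset.range m, (k : ℝ)^2 / k.factorial ≤ 2 * Real.exp 1 := by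
  rcases m with _ | m
  · simpa using (by positivity : (0:ℝ) ≤ 2 * Real.exp 1)
  · rw [Finset.sum_range_succ']
    have h : ∀ i ∈ Finset.range m, ((i+1 : ℕ) : ℝ)^2 / ((i+1).factorial : ℝ)
        = (i : ℝ) / i.factorial + 1 / (i.factorial : ℝ) := by
      intro i _
      rw [Nat.factorial_succ]
      have h1 : ((i:ℝ) + 1) ≠ 0 := by positivity
      have h2 : (i.factorial : ℝ) ≠ 0 := by positivity
      push_cast
      field_simp
    rw [Finset.sum_congr rfl h]
    rw [Finset.sum_add_distrib]
    simp only [Nat.cast_zero, Nat.factorial_zero, Nat.cast_one]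
    have h1 := aux2 m
    have h2 := aux1 m
    simp only [one_div] at h2 ⊢
    norm_num
    linarith

/-- For every `n ≥ 5`, the quantity `S_n = Σ_{k=0}^{n-3} 1/(k! (n-k))` satisfies
`e/n < S_n < e/n + 5/n²`. -/
theorem S_n_bounds (n : ℕ) (hn : 5 ≤ n) :
    Real.exp 1 / n < (∑ k ∈ Finset.range (n - 2), 1 / ((k.factorial : ℝ) * ((n : ℝ) - k))) ∧
    (∑ k ∈ Finset.range (n - 2), 1 / ((k.factorial : ℝ) * ((n : ℝ) - k))) <
      Real.exp 1 / n + 5 / (n : ℝ) ^ 2 := by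
  have hn5 : (5:ℝ) ≤ (n:ℝ) := by exact_mod_cast hn
  have hn0 : (0:ℝ) < n := by linarith
  set S := ∑ k ∈ Finset.range (n - 2), 1 / ((k.factorial : ℝ) * ((n : ℝ) - k)) with hS
  -- common rewrite : ∑ 1/(k!*n) = (∑ 1/k!)/n
  have hPn : ∑ k ∈ Finset.range (n-2), 1 / ((k.factorial : ℝ) * n)
      = (∑ k ∈ Finset.range (n-2), 1 / (k.factorial : ℝ)) / n := by
    rw [Finset.sum_div]
    exact Finset.sum_congr rfl fun k _ => (div_div (1:ℝ) _ _).symm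
  constructor
  · -- lower bound
    set t : ℕ → ℝ := fun k => 1 / ((k.factorial : ℝ) * ((n : ℝ) - k)) - 1 / ((k.factorial : ℝ) * n)
      with ht
    have hsplit : S = ∑ k ∈ Finset.range (n-2), 1 / ((k.factorial : ℝ) * n)
        + ∑ k ∈ Finset.range (n-2), t k := by
      rw [← Finset.sum_add_distrib]
      exact Finset.sum_congr rfl fun k _ => by simp [ht]
    have ht_nonneg : ∀ k ∈ Finset.range (n-2), 0 ≤ t k := by
      intro k hk
      have hk3 : (k:ℝ) + 3 ≤ n := by
        have : k + 3 ≤ n := by simp only [Finset.mem_range] at hk; omega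
        exact_mod_cast this
      have hf : (1:ℝ) ≤ k.factorial := by exact_mod_cast k.factorial_pos
      have hk0 : (0:ℝ) ≤ k := Nat.cast_nonneg k
      simp only [ht, sub_nonneg]
      gcongr
      · nlinarith
      · linarith
    have h12sub : ({1, 2} : Finset ℕ) ⊆ Finset.range (n-2) := by
      intro x hx
      simp only [Finset.mem_insert, Finset.mem_singleton] at hx
      simp only [Finset.mem_range]
      omega
    have h12 : t 1 + t 2 ≤ ∑ k ∈ Finset.range (n-2), t k := by
      have := Finset.sum_le_sum_of_subset_of_nonneg h12sub
        (fun i hi _ => ht_nonneg i hi)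
      rwa [Finset.sum_pair (by norm_num : (1:ℕ) ≠ 2)] at this
    -- exp bound
    have hm0 : 0 < n - 2 := by omega
    have hexp := Real.exp_bound' (by norm_num : (0:ℝ) ≤ 1) (le_refl (1:ℝ)) hm0
    simp only [one_pow, one_mul] at hexp
    have hmcast : ((n-2:ℕ):ℝ) = (n:ℝ) - 2 := by
      push_cast [Nat.cast_sub (by omega : 2 ≤ n)]
      ring
    have hfact : ((n-2:ℕ):ℝ) + 1 ≤ ((n-2).factorial : ℝ) := by
      have h := Nat.succ_le_of_lt (Nat.lt_factorial_self (by omega : 3 ≤ n-2))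
      exact_mod_cast h
    have hfpos : (0:ℝ) < ((n-2).factorial : ℝ) := by
      exact_mod_cast (n-2).factorial_pos
    have hR : (((n-2:ℕ):ℝ)+1)/(((n-2).factorial:ℝ) * ((n-2:ℕ):ℝ)) ≤ 1/((n:ℝ)-2) := by
      rw [hmcast] at hfact ⊢
      rw [div_le_div_iff₀ (by nlinarith) (by linarith)]
      nlinarith
    have ht2 : t 2 = (1/((n:ℝ)-2))/n := by
      have hne1 : (n:ℝ) - 2 ≠ 0 := by linarith
      have hne2 : (n:ℝ) ≠ 0 := by linarith
      simp only [ht]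
      norm_num [Nat.factorial]
      field_simp
      ring
    have ht1 : 0 < t 1 := by
      simp only [ht, sub_pos]
      apply one_div_lt_one_div_of_lt <;> norm_num [Nat.factorial] <;> linarith
    clear ht
    clear_value t
    calc Real.exp 1 / n
        ≤ ((∑ k ∈ Finset.range (n-2), 1 / (k.factorial : ℝ))
            + (((n-2:ℕ):ℝ)+1)/(((n-2).factorial:ℝ) * ((n-2:ℕ):ℝ))) / n := by gcongr
      _ = (∑ k ∈ Finset.range (n-2), 1 / (k.factorial : ℝ)) / n
            + ((((n-2:ℕ):ℝ)+1)/(((n-2).factorial:ℝ) * ((n-2:ℕ):ℝ))) / n := add_div _ _ _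
      _ ≤ (∑ k ∈ Finset.range (n-2), 1 / (k.factorial : ℝ)) / n + (1/((n:ℝ)-2))/n := by gcongr
      _ = (∑ k ∈ Finset.range (n-2), 1 / (k.factorial : ℝ)) / n + t 2 := by rw [ht2]
      _ < (∑ k ∈ Finset.range (n-2), 1 / (k.factorial : ℝ)) / n + (t 1 + t 2) := by linarith
      _ ≤ (∑ k ∈ Finset.range (n-2), 1 / (k.factorial : ℝ)) / n
            + ∑ k ∈ Finset.range (n-2), t k := by linarith
      _ = S := by rw [hsplit, hPn]
  · -- upper bound
    have key : ∀ k ∈ Finset.range (n-2), 1/((k.factorial:ℝ)*((n:ℝ)-k))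
        ≤ 1/((k.factorial:ℝ)*n)
          + ((k:ℝ)/k.factorial + (k:ℝ)^2/k.factorial/3)/(n:ℝ)^2 := by
      intro k hk
      have hk3 : (k:ℝ) + 3 ≤ n := by
        have : k + 3 ≤ n := by simp only [Finset.mem_range] at hk; omega
        exact_mod_cast this
      have hf : (1:ℝ) ≤ k.factorial := by exact_mod_cast k.factorial_pos
      have hk0 : (0:ℝ) ≤ k := Nat.cast_nonneg k
      have hnk : (0:ℝ) < n - k := by linarith
      have hfp : (0:ℝ) < k.factorial := by linarith
      have hid : 1/((k.factorial:ℝ)*n)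
            + ((k:ℝ)/k.factorial + (k:ℝ)^2/k.factorial/3)/(n:ℝ)^2
            - 1/((k.factorial:ℝ)*((n:ℝ)-k))
          = (k:ℝ)^2*((n:ℝ)-3-k) / (3*(k.factorial:ℝ)*(n:ℝ)^2*((n:ℝ)-k)) := by
        field_simp
        ring
      have hpos : 0 ≤ (k:ℝ)^2*((n:ℝ)-3-k) / (3*(k.factorial:ℝ)*(n:ℝ)^2*((n:ℝ)-k)) := by
        apply div_nonneg (mul_nonneg (sq_nonneg _) (by linarith))
        exact le_of_lt (mul_pos (by positivity) hnk)
      linarith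
    have hsum := Finset.sum_le_sum key
    rw [Finset.sum_add_distrib] at hsum
    have hB : ∑ k ∈ Finset.range (n-2),
          ((k:ℝ)/k.factorial + (k:ℝ)^2/k.factorial/3)/(n:ℝ)^2
        = ((∑ k ∈ Finset.range (n-2), (k:ℝ)/k.factorial)
            + (∑ k ∈ Finset.range (n-2), (k:ℝ)^2/k.factorial)/3)/(n:ℝ)^2 := by
      rw [← Finset.sum_div, Finset.sum_add_distrib, ← Finset.sum_div]
    rw [hB, hPn] at hsum
    have he3 : Real.exp 1 < 2.7182818286 := Real.exp_one_lt_d9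
    have h2 : ((∑ k ∈ Finset.range (n-2), (k:ℝ)/k.factorial)
            + (∑ k ∈ Finset.range (n-2), (k:ℝ)^2/k.factorial)/3)/(n:ℝ)^2
        < 5/(n:ℝ)^2 := by
      apply (div_lt_div_iff_of_pos_right (by positivity)).mpr
      have ha := aux2 (n-2)
      have hb := aux3 (n-2)
      linarith
    have h1 : (∑ k ∈ Finset.range (n-2), 1 / (k.factorial : ℝ)) / n ≤ Real.exp 1 / n := by
      gcongr
      exact aux1 (n-2)
    calc S ≤ _ := hsum
      _ < Real.exp 1 / n + 5/(n:ℝ)^2 := by linarith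
end

section
/- For each integer n ≥ 3, the number of simple biased graphs with vertex set [n] that arise from an abelian-group-labelling is at most (2·n! + 1)^{C(n,2)²}, where C(n,2) = n(n-1)/2. -/
open SimpleGraph

/-- The product `σ` of the labels along a walk, where an edge traversed from `x` to `y`
contributes `γ(xy)` if `x < y` and `γ(xy)⁻¹` otherwise. -/
def walkLabelProd {n : ℕ} {Γ : Type} [Group Γ] (γ : Sym2 (Fin n) → Γ)
    {G : SimpleGraph (Fin n)} {u v : Fin n} (w : G.Walk u v) : Γ :=
  (w.darts.map fun d =>
    if d.fst < d.snd then γ s(d.fst, d.snd) else (γ s(d.fst, d.snd))⁻¹).prod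

/-- A cycle subgraph `C` of `G` is balanced with respect to the labelling `γ` if the
product of the labels along a cyclic ordering of `C` is the identity. -/
def IsBalancedCycle {n : ℕ} {Γ : Type} [Group Γ] {G : SimpleGraph (Fin n)}
    (γ : Sym2 (Fin n) → Γ) (C : G.Subgraph) : Prop :=
  IsCycleSubgraph G C ∧
  ∃ (u : Fin n) (w : G.Walk u u), w.IsCycle ∧ w.toSubgraph = C ∧ walkLabelProd γ w = 1

/-- `(G, B)` arises from an abelian-group-labelling: `B` is exactly the set of balanced
cycles with respect to some labelling of the edges of `G` by an abelian group. -/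
def ArisesFromAbelianLabelling {n : ℕ} (G : SimpleGraph (Fin n))
    (B : Set G.Subgraph) : Prop :=
  ∃ (Γ : Type) (_ : CommGroup Γ) (γ : Sym2 (Fin n) → Γ),
    B = {C | IsBalancedCycle γ C}

/-- The number of simple biased graphs with vertex set `[n]` that arise from an
abelian-group-labelling. -/
noncomputable def abelianLabellableCount (n : ℕ) : ℕ :=
  Nat.card {p : Σ G : SimpleGraph (Fin n), Set G.Subgraph //
    IsBiasedGraph p.1 p.2 ∧ ArisesFromAbelianLabelling p.1 p.2}

namespace ALC


set_option linter.unusedSectionVars false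
set_option maxHeartbeats 1000000

variable {E : Type} [Fintype E] [DecidableEq E]





/-- Coordinatewise cast of integer vectors to rational vectors, as a `ℤ`-linear map. -/
def castQ : (E → ℤ) →ₗ[ℤ] (E → ℚ) where
  toFun x e := (x e : ℚ)
  map_add' x y := by funext e; simp
  map_smul' c x := by funext e; push_cast; simp

@[simp] lemma castQ_apply (x : E → ℤ) (e : E) : castQ x e = (x e : ℚ) := rfl

lemma castQ_injective : Function.Injective (castQ (E := E)) := by
  intro x y h
  funext e
  have : ((x e : ℚ)) = (y e : ℚ) := congrFun h e
  exact_mod_cast this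

lemma indepZ_of_indepQ {ι : Type*} {v : ι → (E → ℤ)}
    (h : LinearIndependent ℚ (fun i => castQ (v i))) : LinearIndependent ℤ v := by
  rw [linearIndependent_iff'] at h ⊢
  intro s g hg i hi
  have hcast : ∑ i ∈ s, (g i : ℚ) • castQ (v i) = 0 := by
    have h2 := congrArg castQ hg
    rw [map_sum, map_zero] at h2
    rw [← h2]
    refine Finset.sum_congr rfl fun j _ => ?_
    rw [map_zsmul]
    rw [← Int.cast_smul_eq_zsmul ℚ]
  exact_mod_cast h s (fun i => (g i : ℚ)) hcast i hi

/-- Clearing denominators. -/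
lemma exists_int_smul_mem_span {T : Finset (E → ℤ)} {y : E → ℤ}
    (hy : castQ y ∈ Submodule.span ℚ (castQ '' (T : Set (E → ℤ)))) :
    ∃ c : ℤ, c ≠ 0 ∧ c • y ∈ Submodule.span ℤ (T : Set (E → ℤ)) := by
  classical
  have himg : ((T.image (fun t => castQ t) : Finset (E → ℚ)) : Set (E → ℚ))
      = castQ '' (T : Set (E → ℤ)) := by
    simp [Finset.coe_image]
  rw [← himg, Submodule.mem_span_finset] at hy
  obtain ⟨f, -, hf⟩ := hy
  rw [Finset.sum_image (fun a _ b _ h => castQ_injective h)] at hf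
  set c : ℤ := ∏ t ∈ T, ((f (castQ t)).den : ℤ) with hc
  have hden : ∀ t ∈ T, ((f (castQ t)).den : ℤ) ∣ c := fun t ht =>
    Finset.dvd_prod_of_mem _ ht
  have hcne : c ≠ 0 := by
    rw [hc]
    exact Finset.prod_ne_zero_iff.2 fun t _ => by
      exact_mod_cast (f (castQ t)).den_ne_zero
  refine ⟨c, hcne, ?_⟩
  set z : (E → ℤ) → ℤ := fun t => (f (castQ t)).num * (c / ((f (castQ t)).den : ℤ)) with hz
  have hzq : ∀ t ∈ T, (z t : ℚ) = (c : ℚ) * f (castQ t) := by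
    intro t ht
    obtain ⟨k, hk⟩ := hden t ht
    have hdenne : ((f (castQ t)).den : ℤ) ≠ 0 := by exact_mod_cast (f (castQ t)).den_ne_zero
    have hnum : (f (castQ t)) * ((f (castQ t)).den : ℚ) = ((f (castQ t)).num : ℚ) :=
      Rat.mul_den_eq_num _
    rw [hz]
    simp only [hk]
    rw [Int.mul_ediv_cancel_left _ hdenne]
    push_cast
    rw [← hnum]
    ring
  have key : castQ (c • y) = castQ (∑ t ∈ T, z t • t) := by
    rw [map_sum]
    funext e
    simp only [castQ_apply, Pi.smul_apply, smul_eq_mul, Finset.sum_apply, map_zsmul]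
    push_cast
    have h3 := congrFun hf e
    simp only [Finset.sum_apply, Pi.smul_apply, smul_eq_mul, castQ_apply] at h3
    calc (c : ℚ) * (y e : ℚ) = (c:ℚ) * ∑ t ∈ T, f (castQ t) * (t e : ℚ) := by rw [h3]
    _ = ∑ t ∈ T, ((c:ℚ) * f (castQ t)) * (t e : ℚ) := by rw [Finset.mul_sum]; ring_nf
    _ = ∑ t ∈ T, (z t : ℚ) * (t e : ℚ) := by
        refine Finset.sum_congr rfl fun t ht => ?_
        rw [hzq t ht]
    _ = ∑ t ∈ T, z t • ((t e : ℚ)) := by simp [zsmul_eq_mul]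
  have h4 := castQ_injective key
  rw [h4]
  exact Submodule.sum_smul_mem _ _ fun t ht => Submodule.subset_span ht

/-- Leibniz bound. -/
lemma abs_det_le_factorial {r : ℕ} (A : Matrix (Fin r) (Fin r) ℤ)
    (h : ∀ i j, |A i j| ≤ 1) : |A.det| ≤ (r.factorial : ℤ) := by
  classical
  rw [Matrix.det_apply]
  calc |∑ σ : Equiv.Perm (Fin r), Equiv.Perm.sign σ • ∏ i, A (σ i) i|
      ≤ ∑ σ : Equiv.Perm (Fin r), |Equiv.Perm.sign σ • ∏ i, A (σ i) i| :=
        Finset.abs_sum_le_sum_abs _ _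
    _ ≤ ∑ _σ : Equiv.Perm (Fin r), 1 := by
        refine Finset.sum_le_sum fun σ _ => ?_
        have h1 : |Equiv.Perm.sign σ • ∏ i, A (σ i) i| = |∏ i, A (σ i) i| := by
          rcases Int.units_eq_one_or (Equiv.Perm.sign σ) with h' | h' <;>
            simp [h', Units.smul_def]
        rw [h1, Finset.abs_prod]
        calc ∏ i, |A (σ i) i| ≤ ∏ _i : Fin r, 1 :=
              Finset.prod_le_prod (fun _ _ => abs_nonneg _) (fun i _ => h (σ i) i)
          _ = 1 := by simp
    _ = (r.factorial : ℤ) := by simp [Finset.card_univ, Fintype.card_perm]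






/-- Express a family of vectors of a submodule in terms of a basis; the coordinate matrix
factors the "row-selected" matrices. -/
lemma exists_factor {r : ℕ} (J : Fin r → E) {K : Submodule ℤ (E → ℤ)}
    (b : Module.Basis (Fin r) ℤ K) (v : Fin r → (E → ℤ)) (hv : ∀ j, v j ∈ K) :
    ∃ C : Matrix (Fin r) (Fin r) ℤ,
      (∀ j, v j = ∑ k, C k j • ((b k : E → ℤ))) ∧
      (Matrix.of fun i j => v j (J i))
        = (Matrix.of fun i j => (b j : E → ℤ) (J i)) * C := by
  refine ⟨Matrix.of fun k j => b.repr ⟨v j, hv j⟩ k, ?_, ?_⟩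
  · intro j
    have h := b.sum_repr ⟨v j, hv j⟩
    have h2 := congrArg (K.subtype) h
    rw [map_sum] at h2
    simp only [Submodule.coe_subtype, SetLike.val_smul, Submodule.coe_smul] at h2 ⊢
    rw [← h2]
    rfl
  · ext i j
    have h := b.sum_repr ⟨v j, hv j⟩
    have h2 := congrArg (fun x : K => (x : E → ℤ) (J i)) h
    simp only [Submodule.coe_sum, Finset.sum_apply, SetLike.val_smul, Pi.smul_apply,
      smul_eq_mul] at h2
    rw [Matrix.mul_apply]
    simp only [Matrix.of_apply]
    rw [← h2]
    exact Finset.sum_congr rfl fun k _ => mul_comm _ _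

/-- If the coordinate matrix of a family is unimodular, the family spans the submodule. -/
lemma span_le_of_isUnit {r : ℕ} {K : Submodule ℤ (E → ℤ)} (b : Module.Basis (Fin r) ℤ K)
    (v : Fin r → (E → ℤ)) (C : Matrix (Fin r) (Fin r) ℤ)
    (hv : ∀ j, v j = ∑ k, C k j • ((b k : E → ℤ))) (hC : IsUnit C.det) :
    K ≤ Submodule.span ℤ (Set.range v) := by
  classical
  have hCu : IsUnit C := (Matrix.isUnit_iff_isUnit_det C).2 hC
  obtain ⟨U, hU⟩ := hCu
  set D := (↑U⁻¹ : Matrix (Fin r) (Fin r) ℤ) with hD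
  have hCD : C * D = 1 := by rw [hD, ← hU]; exact U.mul_inv
  -- each basis vector lies in the span of v
  have hb : ∀ l, ((b l : E → ℤ)) ∈ Submodule.span ℤ (Set.range v) := by
    intro l
    have hcalc : ∑ j, D j l • v j = (b l : E → ℤ) := by
      calc ∑ j, D j l • v j = ∑ j, D j l • ∑ k, C k j • ((b k : E → ℤ)) := by
            refine Finset.sum_congr rfl fun j _ => by rw [hv j]
        _ = ∑ j, ∑ k, (C k j * D j l) • ((b k : E → ℤ)) := by
            refine Finset.sum_congr rfl fun j _ => ?_
            rw [Finset.smul_sum]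
            refine Finset.sum_congr rfl fun k _ => ?_
            rw [smul_smul, mul_comm]
        _ = ∑ k, ∑ j, (C k j * D j l) • ((b k : E → ℤ)) := Finset.sum_comm
        _ = ∑ k, (∑ j, C k j * D j l) • ((b k : E → ℤ)) := by
            refine Finset.sum_congr rfl fun k _ => ?_
            rw [← Finset.sum_smul]
        _ = ∑ k, ((C * D) k l) • ((b k : E → ℤ)) := by
            refine Finset.sum_congr rfl fun k _ => by rw [Matrix.mul_apply]
        _ = ∑ k, ((1 : Matrix (Fin r) (Fin r) ℤ) k l) • ((b k : E → ℤ)) := by rw [hCD]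
        _ = (b l : E → ℤ) := by
            rw [Finset.sum_eq_single l]
            · simp [Matrix.one_apply]
            · intro k _ hkl; simp [Matrix.one_apply, hkl]
            · intro h; exact absurd (Finset.mem_univ l) h
    rw [← hcalc]
    exact Submodule.sum_mem _ fun j _ =>
      Submodule.smul_mem _ _ (Submodule.subset_span ⟨j, rfl⟩)
  -- hence K ≤ span of v
  intro x hx
  have hxr : x = ∑ k, b.repr ⟨x, hx⟩ k • ((b k : E → ℤ)) := by
    have h := b.sum_repr ⟨x, hx⟩
    have h2 := congrArg (K.subtype) h
    rw [map_sum] at h2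
    simp only [Submodule.coe_subtype, SetLike.val_smul, Submodule.coe_smul] at h2
    exact h2.symm
  rw [hxr]
  exact Submodule.sum_mem _ fun k _ => Submodule.smul_mem _ _ (hb k)







/-- For a linearly independent family of rational vectors, one can select coordinate
positions making the corresponding square matrix nonsingular. -/
lemma exists_rows {r : ℕ} (w : Fin r → (E → ℚ)) (hw : LinearIndependent ℚ w) :
    ∃ J : Fin r → E, (Matrix.of fun i j => w j (J i)).det ≠ 0 := by
  classical
  set W : Submodule ℚ (E → ℚ) := Submodule.span ℚ (Set.range w) with hW
  set U : Finset E → Submodule ℚ (E → ℚ) :=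
    fun s => W ⊓ (⨅ e ∈ s, LinearMap.ker (LinearMap.proj e : (E → ℚ) →ₗ[ℚ] ℚ)) with hU
  have hUmem : ∀ (s : Finset E) (x : E → ℚ), x ∈ U s ↔ x ∈ W ∧ ∀ e ∈ s, x e = 0 := by
    intro s x
    simp [hU, Submodule.mem_iInf, LinearMap.mem_ker]
  have hUmono : ∀ {s s' : Finset E}, s ⊆ s' → U s' ≤ U s := by
    intro s s' hss x hx
    rw [hUmem] at hx ⊢
    exact ⟨hx.1, fun e he => hx.2 e (hss he)⟩
  have key : ∀ (k : ℕ) (s : Finset E), Module.finrank ℚ (U s) ≤ k →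
      ∃ s' : Finset E, s ⊆ s' ∧ s'.card ≤ s.card + k ∧ U s' = ⊥ := by
    intro k
    induction k with
    | zero =>
      intro s hs
      refine ⟨s, subset_rfl, by omega, ?_⟩
      have : Module.finrank ℚ (U s) = 0 := Nat.le_zero.1 hs
      exact Submodule.finrank_eq_zero.1 this
    | succ k ih =>
      intro s hs
      by_cases hbot : U s = ⊥
      · exact ⟨s, subset_rfl, by omega, hbot⟩
      · obtain ⟨x, hxU, hxne⟩ := Submodule.exists_mem_ne_zero_of_ne_bot hbot
        have hxe : ∃ e, x e ≠ 0 := by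
          by_contra h
          push_neg at h
          exact hxne (funext h)
        obtain ⟨e, he⟩ := hxe
        have hes : e ∉ s := fun hmem => he (((hUmem s x).1 hxU).2 e hmem)
        have hlt : U (insert e s) < U s := by
          refine lt_of_le_of_ne (hUmono (Finset.subset_insert e s)) ?_
          intro heq
          have : x ∈ U (insert e s) := heq ▸ hxU
          exact he (((hUmem _ x).1 this).2 e (Finset.mem_insert_self e s))
        have hrk : Module.finrank ℚ (U (insert e s)) < Module.finrank ℚ (U s) :=
          Submodule.finrank_lt_finrank_of_lt hlt
        obtain ⟨s', hss', hcard, hbot'⟩ := ih (insert e s) (by omega)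
        refine ⟨s', (Finset.subset_insert e s).trans hss', ?_, hbot'⟩
        have : (insert e s).card = s.card + 1 := Finset.card_insert_of_notMem hes
        omega
  have hrkW : Module.finrank ℚ W = r := by
    rw [hW, finrank_span_eq_card hw, Fintype.card_fin]
  have hU0 : Module.finrank ℚ (U ∅) ≤ r := by
    have h1 : U ∅ ≤ W := inf_le_left
    calc Module.finrank ℚ (U ∅) ≤ Module.finrank ℚ W := Submodule.finrank_mono h1
      _ = r := hrkW
  obtain ⟨s, -, hcard, hbot⟩ := key r ∅ hU0
  rw [Finset.card_empty, Nat.zero_add] at hcard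
  have hinj : ∀ x ∈ W, (∀ e ∈ s, x e = 0) → x = 0 := by
    intro x hxW hxs
    have : x ∈ U s := (hUmem s x).2 ⟨hxW, hxs⟩
    rw [hbot] at this
    simpa using this
  have hres : LinearIndependent ℚ (fun j => (fun e : {e // e ∈ s} => w j e.1)) := by
    rw [linearIndependent_iff'] at hw ⊢
    intro t g hg j hj
    refine hw t g ?_ j hj
    have hxW : (∑ i ∈ t, g i • w i) ∈ W := Submodule.sum_mem _ fun i _ =>
      Submodule.smul_mem _ _ (Submodule.subset_span ⟨i, rfl⟩)
    refine hinj _ hxW ?_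
    intro e he
    have h5 := congrFun hg ⟨e, he⟩
    simpa [Finset.sum_apply] using h5
  have hler : r ≤ s.card := by
    have h6 := hres.fintype_card_le_finrank
    rwa [Fintype.card_fin, Module.finrank_pi, Fintype.card_coe] at h6
  have hcardeq : r = s.card := le_antisymm hler hcard
  set J : Fin r → E := fun i => (s.equivFin.symm (finCongr hcardeq i)).1 with hJ
  have hJcover : ∀ e ∈ s, ∃ i : Fin r, J i = e := by
    intro e he
    exact ⟨finCongr hcardeq.symm (s.equivFin ⟨e, he⟩), by simp [hJ]⟩
  refine ⟨J, ?_⟩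
  intro hdet
  obtain ⟨v, hv0, hvmul⟩ := Matrix.exists_mulVec_eq_zero_iff.2 hdet
  have huW : (∑ j, v j • w j) ∈ W := Submodule.sum_mem _ fun j _ =>
    Submodule.smul_mem _ _ (Submodule.subset_span ⟨j, rfl⟩)
  have hu0 : (∑ j, v j • w j) = 0 := by
    refine hinj _ huW ?_
    intro e he
    obtain ⟨i, hi⟩ := hJcover e he
    have h7 := congrFun hvmul i
    simp only [Matrix.mulVec, dotProduct, Matrix.of_apply, Pi.zero_apply] at h7
    rw [← hi]
    simp only [Finset.sum_apply, Pi.smul_apply, smul_eq_mul]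
    rw [← h7]
    exact Finset.sum_congr rfl fun j _ => mul_comm _ _
  have := linearIndependent_iff'.1 hw Finset.univ v hu0
  obtain ⟨j, hj⟩ := Function.ne_iff.1 hv0
  exact hj (this j (Finset.mem_univ j))


/-- `m! ≤ 2^(m(m-2))` for `m ≥ 3`. -/
lemma factorial_le_two_pow : ∀ a : ℕ, (a + 3).factorial ≤ 2 ^ ((a + 3) * (a + 1)) := by
  intro a
  induction a with
  | zero => norm_num [Nat.factorial]
  | succ a ih =>
    have h1 : (a + 1 + 3).factorial = (a + 4) * (a + 3).factorial := by
      rw [show a + 1 + 3 = (a + 3) + 1 by ring, Nat.factorial_succ]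
    have h2 : (a + 4) ≤ 2 ^ (2 * a + 5) := by
      calc a + 4 ≤ 2 ^ (a + 4) := le_of_lt Nat.lt_two_pow_self
        _ ≤ 2 ^ (2 * a + 5) := Nat.pow_le_pow_right (by norm_num) (by omega)
    have h3 : (a + 1 + 3) * (a + 1 + 1) = (a + 3) * (a + 1) + (2 * a + 5) := by ring
    calc (a + 1 + 3).factorial = (a + 4) * (a + 3).factorial := h1
      _ ≤ 2 ^ (2 * a + 5) * 2 ^ ((a + 3) * (a + 1)) := Nat.mul_le_mul h2 ih
      _ = 2 ^ ((a + 1 + 3) * (a + 1 + 1)) := by rw [← pow_add, h3, Nat.add_comm]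

/-- The key generation lemma: any set `Y` of `{-1,0,1}`-vectors over a coordinate set of
size `m ≥ 3` admits a generating subset of size at most `m² - m` for its integer span. -/
lemma exists_small_generating {m : ℕ} (hm : 3 ≤ m) (hEcard : Fintype.card E = m)
    (Y : Set (E → ℤ)) (hY : ∀ y ∈ Y, ∀ e, y e = -1 ∨ y e = 0 ∨ y e = 1) :
    ∃ S : Finset (E → ℤ), ↑S ⊆ Y ∧ S.card ≤ m * m - m ∧
      Submodule.span ℤ (S : Set (E → ℤ)) = Submodule.span ℤ Y := by
  classical
  -- Y is finite
  have hfin : Y.Finite := by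
    have hsub : Y ⊆ Set.univ.pi (fun _ : E => ({-1, 0, 1} : Set ℤ)) := by
      intro y hy
      rw [Set.mem_univ_pi]
      intro e
      rcases hY y hy e with h | h | h <;> simp [h]
    exact (Set.Finite.pi fun _ =>
      (((Set.finite_singleton (1:ℤ)).insert 0).insert (-1))).subset hsub
  set Yf : Finset (E → ℤ) := hfin.toFinset with hYfdef
  have hYf : (Yf : Set (E → ℤ)) = Y := hfin.coe_toFinset
  -- choose a maximal rationally independent subset T of Y
  obtain ⟨bset, hbsub, hbspan, hbind⟩ := exists_linearIndependent ℚ (castQ '' Y)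
  set T : Finset (E → ℤ) := Yf.filter (fun y => castQ y ∈ bset) with hTdef
  have hTY : (T : Set (E → ℤ)) ⊆ Y := by
    intro y hy
    rw [Finset.mem_coe, hTdef, Finset.mem_filter] at hy
    rw [← hYf]
    exact Finset.mem_coe.2 hy.1
  have himgT : castQ '' (T : Set (E → ℤ)) = bset := by
    apply Set.Subset.antisymm
    · rintro x ⟨y, hy, rfl⟩
      rw [hTdef] at hy
      simp only [Finset.coe_filter, Set.mem_setOf_eq] at hy
      exact hy.2
    · intro x hx
      obtain ⟨y, hyY, rfl⟩ := hbsub hx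
      refine ⟨y, ?_, rfl⟩
      rw [hTdef]
      simp only [Finset.coe_filter, Set.mem_setOf_eq]
      exact ⟨by rw [Set.Finite.mem_toFinset]; exact hyY, hx⟩
  set r : ℕ := T.card with hrdef
  set tvec : Fin r → (E → ℤ) := fun i => ((T.equivFin.symm i : ↥T) : E → ℤ) with htvec
  have htvecmem : ∀ i, tvec i ∈ T := fun i => (T.equivFin.symm i).2
  have hrange : Set.range tvec = (T : Set (E → ℤ)) := by
    ext x
    constructor
    · rintro ⟨i, rfl⟩
      exact (T.equivFin.symm i).2
    · intro hx
      exact ⟨T.equivFin ⟨x, hx⟩, by simp [htvec]⟩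
  have htinj : Function.Injective tvec :=
    Subtype.val_injective.comp T.equivFin.symm.injective
  have hgmem : ∀ i, castQ (tvec i) ∈ bset := by
    intro i
    rw [← himgT]
    exact ⟨tvec i, htvecmem i, rfl⟩
  have hQind : LinearIndependent ℚ (fun i => castQ (tvec i)) := by
    have hg : Function.Injective (fun i : Fin r => (⟨castQ (tvec i), hgmem i⟩ : ↥bset)) := by
      intro i j hij
      exact htinj (castQ_injective (congrArg Subtype.val hij))
    exact hbind.comp _ hg
  have hZind : LinearIndependent ℤ tvec := indepZ_of_indepQ hQind
  -- every element of Y has a nonzero multiple in the span of T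
  have hmul : ∀ y ∈ Y, ∃ c : ℤ, c ≠ 0 ∧ c • y ∈ Submodule.span ℤ (T : Set (E → ℤ)) := by
    intro y hy
    apply exists_int_smul_mem_span
    rw [himgT, hbspan]
    exact Submodule.subset_span ⟨y, hy, rfl⟩
  -- hence so does every element of the span of Y
  have hspanmul : ∀ x ∈ Submodule.span ℤ Y, ∃ c : ℤ, c ≠ 0 ∧
      c • x ∈ Submodule.span ℤ (T : Set (E → ℤ)) := by
    intro x hx
    rw [← hYf, Submodule.mem_span_finset] at hx
    obtain ⟨g, -, hg⟩ := hx
    choose cf hcf0 hcfm using hmul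
    set c : ℤ := ∏ y ∈ Yf.attach, cf y.1 (hYf ▸ y.2) with hcdef
    have hcne : c ≠ 0 := Finset.prod_ne_zero_iff.2 fun y _ => hcf0 _ _
    refine ⟨c, hcne, ?_⟩
    rw [← hg, Finset.smul_sum]
    refine Submodule.sum_mem _ fun y hy => ?_
    have hyY : y ∈ Y := hYf ▸ hy
    have hdvd : cf y hyY ∣ c := by
      have : (⟨y, hy⟩ : ↥Yf) ∈ Yf.attach := Finset.mem_attach _ _
      exact Finset.dvd_prod_of_mem (fun z : ↥Yf => cf z.1 (hYf ▸ z.2)) this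
    obtain ⟨k, hk⟩ := hdvd
    have hsc : c * g y = k * (g y * cf y hyY) := by rw [hk]; ring
    rw [smul_smul, hsc, ← smul_smul, ← smul_smul]
    exact Submodule.smul_mem _ _ (Submodule.smul_mem _ _ (hcfm y hyY))
  -- r ≤ m
  have hrm : r ≤ m := by
    have h := hZind.fintype_card_le_finrank
    rwa [Fintype.card_fin, Module.finrank_pi, hEcard] at h
  -- select rows J
  obtain ⟨J, hdetQ⟩ := exists_rows (fun i => castQ (tvec i)) hQind
  set A : Matrix (Fin r) (Fin r) ℤ := Matrix.of fun i j => tvec j (J i) with hAdef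
  have hdetA : A.det ≠ 0 := by
    intro h0
    apply hdetQ
    have hmap : (Matrix.of fun i j => castQ (tvec j) (J i))
        = (Int.castRingHom ℚ).mapMatrix A := by
      ext i j
      simp [RingHom.mapMatrix_apply, Matrix.map_apply]
      rfl
    rw [hmap, ← RingHom.map_det, h0]
    simp
  have hdetAle : |A.det| ≤ (r.factorial : ℤ) := by
    apply abs_det_le_factorial
    intro i j
    rcases hY (tvec j) (hTY (htvecmem j)) (J i) with h | h | h <;>
      simp [hAdef, h]
  -- the rank of any intermediate submodule is r
  have hrank : ∀ (K : Submodule ℤ (E → ℤ)), Submodule.span ℤ (T : Set (E → ℤ)) ≤ K →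
      K ≤ Submodule.span ℤ Y → ∀ (q : ℕ) (b : Module.Basis (Fin q) ℤ K), q = r := by
    intro K hTK hKY q b
    haveI : Module.Finite ℤ K := Module.Finite.of_basis b
    have hfrk : Module.finrank ℤ K = q := by
      rw [Module.finrank_eq_card_basis b, Fintype.card_fin]
    -- r ≤ q
    have hrq : r ≤ q := by
      have hmemK : ∀ i, tvec i ∈ K := fun i =>
        hTK (Submodule.subset_span (htvecmem i))
      have hind : LinearIndependent ℤ (fun i : Fin r => (⟨tvec i, hmemK i⟩ : K)) := by
        apply LinearIndependent.of_comp K.subtype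
        exact hZind
      have h := hind.fintype_card_le_finrank
      rwa [Fintype.card_fin, hfrk] at h
    -- q ≤ r
    have hqr : q ≤ r := by
      set vb : Fin q → (E → ℤ) := fun i => (b i : E → ℤ) with hvbdef
      have hvbind : LinearIndependent ℤ vb :=
        b.linearIndependent.map' K.subtype (Submodule.ker_subtype K)
      have hvbY : ∀ i, vb i ∈ Submodule.span ℤ Y := fun i => hKY (b i).2
      choose cb hcb0 hcbm using fun i => hspanmul (vb i) (hvbY i)
      set c : ℤ := ∏ i, cb i with hcdef2
      have hcne : c ≠ 0 := Finset.prod_ne_zero_iff.2 fun i _ => hcb0 i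
      have hmemT : ∀ i, c • vb i ∈ Submodule.span ℤ (T : Set (E → ℤ)) := by
        intro i
        have hdvd : cb i ∣ c := Finset.dvd_prod_of_mem _ (Finset.mem_univ i)
        obtain ⟨k, hk⟩ := hdvd
        rw [hk, mul_comm, ← smul_smul]
        exact Submodule.smul_mem _ _ (hcbm i)
      have hcind : LinearIndependent ℤ (fun i => c • vb i) := by
        have := hvbind.map' (LinearMap.lsmul ℤ (E → ℤ) c)
          (LinearMap.ker_eq_bot.2 (smul_right_injective _ hcne))
        exact this
      have hind2 : LinearIndependent ℤ
          (fun i : Fin q => (⟨c • vb i, hmemT i⟩ : Submodule.span ℤ (T : Set (E → ℤ)))) := by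
        apply LinearIndependent.of_comp (Submodule.span ℤ (T : Set (E → ℤ))).subtype
        exact hcind
      -- the span of T is free of rank r
      have hbT0 : Module.Basis (Fin r) ℤ (Submodule.span ℤ (Set.range tvec)) := Module.Basis.span hZind
      have hspaneq : Submodule.span ℤ (Set.range tvec)
          = Submodule.span ℤ (T : Set (E → ℤ)) := by rw [hrange]
      have hbT : Module.Basis (Fin r) ℤ (Submodule.span ℤ (T : Set (E → ℤ))) :=
        hbT0.map (LinearEquiv.ofEq _ _ hspaneq)
      haveI : Module.Finite ℤ (Submodule.span ℤ (T : Set (E → ℤ))) :=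
        Module.Finite.of_basis hbT
      have h := hind2.fintype_card_le_finrank
      rwa [Fintype.card_fin, Module.finrank_eq_card_basis hbT, Fintype.card_fin] at h
    omega
  -- basis of span T whose vectors are tvec
  have hspaneq : Submodule.span ℤ (Set.range tvec)
      = Submodule.span ℤ (T : Set (E → ℤ)) := by rw [hrange]
  set bT : Module.Basis (Fin r) ℤ (Submodule.span ℤ (T : Set (E → ℤ))) :=
    (Module.Basis.span hZind).map (LinearEquiv.ofEq _ _ hspaneq) with hbTdef
  have hbTval : ∀ j, (bT j : E → ℤ) = tvec j := by
    intro j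
    rw [hbTdef]
    simp only [Module.Basis.map_apply]
    have h1 : ((LinearEquiv.ofEq _ _ hspaneq) ((Module.Basis.span hZind) j) : E → ℤ)
        = (((Module.Basis.span hZind) j : E → ℤ)) := rfl
    rw [h1]
    exact congrArg Subtype.val (Module.Basis.span_apply hZind j)
  have hMatbT : (Matrix.of fun i j => (bT j : E → ℤ) (J i)) = A := by
    ext i j
    simp only [Matrix.of_apply, hbTval, hAdef]
  have hdone : ∀ (S : Finset (E → ℤ)), (S : Set (E → ℤ)) ⊆ Y →
      Y ⊆ (Submodule.span ℤ (S : Set (E → ℤ)) : Set (E → ℤ)) →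
      Submodule.span ℤ (S : Set (E → ℤ)) = Submodule.span ℤ Y := by
    intro S hSY hYS
    refine le_antisymm (Submodule.span_mono hSY) ?_
    rw [Submodule.span_le]
    exact hYS
  -- one step of the growth procedure
  have step : ∀ (S : Finset (E → ℤ)), (S : Set (E → ℤ)) ⊆ Y → T ⊆ S →
      ∀ (b : Module.Basis (Fin r) ℤ (Submodule.span ℤ (S : Set (E → ℤ)))),
      ¬ (Y ⊆ (Submodule.span ℤ (S : Set (E → ℤ)) : Set (E → ℤ))) →
      ∃ (S₂ : Finset (E → ℤ)) (b₂ : Module.Basis (Fin r) ℤ (Submodule.span ℤ (S₂ : Set (E → ℤ)))),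
        S ⊆ S₂ ∧ (S₂ : Set (E → ℤ)) ⊆ Y ∧ T ⊆ S₂ ∧ S₂.card = S.card + 1 ∧
        (Matrix.of fun i j => ((b₂ j : E → ℤ)) (J i)).det ≠ 0 ∧
        2 * |(Matrix.of fun i j => ((b₂ j : E → ℤ)) (J i)).det|
          ≤ |(Matrix.of fun i j => ((b j : E → ℤ)) (J i)).det| := by
    intro S hSY hTS b hnot
    obtain ⟨y, hyY, hynot⟩ := Set.not_subset.1 hnot
    set S₂ : Finset (E → ℤ) := insert y S with hS₂def
    have hS₂Y : (S₂ : Set (E → ℤ)) ⊆ Y := by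
      rw [hS₂def, Finset.coe_insert]
      exact Set.insert_subset hyY hSY
    have hynS : y ∉ S := fun h => hynot (Submodule.subset_span (Finset.mem_coe.2 h))
    have hcard2 : S₂.card = S.card + 1 := Finset.card_insert_of_notMem hynS
    have hsub2 : (S : Set (E → ℤ)) ⊆ (S₂ : Set (E → ℤ)) := by
      rw [hS₂def, Finset.coe_insert]
      exact Set.subset_insert _ _
    have hspanle : Submodule.span ℤ (S : Set (E → ℤ)) ≤ Submodule.span ℤ (S₂ : Set (E → ℤ)) :=
      Submodule.span_mono hsub2
    have hTS₂ : T ⊆ S₂ := hTS.trans (Finset.subset_insert y S)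
    have hTsub2 : (T : Set (E → ℤ)) ⊆ (S₂ : Set (E → ℤ)) := Finset.coe_subset.2 hTS₂
    obtain ⟨q, b₂'⟩ := Submodule.basisOfPid (Pi.basisFun ℤ E)
      (Submodule.span ℤ (S₂ : Set (E → ℤ)))
    have hq : q = r := hrank _ (Submodule.span_mono hTsub2)
      (le_trans (Submodule.span_mono hS₂Y) le_rfl) q b₂'
    set b₂ : Module.Basis (Fin r) ℤ (Submodule.span ℤ (S₂ : Set (E → ℤ))) :=
      b₂'.reindex (finCongr hq) with hb₂def
    have hbmem : ∀ j, (b j : E → ℤ) ∈ Submodule.span ℤ (S₂ : Set (E → ℤ)) :=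
      fun j => hspanle (b j).2
    obtain ⟨C, hvC, hmatC⟩ := exists_factor J b₂ (fun j => (b j : E → ℤ)) hbmem
    have htmem : ∀ j, tvec j ∈ Submodule.span ℤ (S : Set (E → ℤ)) :=
      fun j => Submodule.subset_span (Finset.mem_coe.2 (hTS (htvecmem j)))
    obtain ⟨C₀, -, hmatC₀⟩ := exists_factor J b tvec htmem
    have hdetb : (Matrix.of fun i j => ((b j : E → ℤ)) (J i)).det ≠ 0 := by
      intro h0
      apply hdetA
      have hAeq : A = (Matrix.of fun i j => ((b j : E → ℤ)) (J i)) * C₀ := hmatC₀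
      rw [hAeq, Matrix.det_mul, h0, zero_mul]
    have hdetfac : (Matrix.of fun i j => ((b j : E → ℤ)) (J i)).det
        = (Matrix.of fun i j => ((b₂ j : E → ℤ)) (J i)).det * C.det := by
      rw [hmatC, Matrix.det_mul]
    have hdet₂ne : (Matrix.of fun i j => ((b₂ j : E → ℤ)) (J i)).det ≠ 0 := by
      intro h0
      exact hdetb (by rw [hdetfac, h0, zero_mul])
    have hCne : C.det ≠ 0 := by
      intro h0
      exact hdetb (by rw [hdetfac, h0, mul_zero])
    have hCnotunit : ¬ IsUnit C.det := by
      intro hu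
      have hspan := span_le_of_isUnit b₂ (fun j => (b j : E → ℤ)) C hvC hu
      have h2 : Submodule.span ℤ (Set.range fun j => (b j : E → ℤ))
          ≤ Submodule.span ℤ (S : Set (E → ℤ)) := by
        rw [Submodule.span_le]
        rintro x ⟨j, rfl⟩
        exact (b j).2
      have hy2 : y ∈ Submodule.span ℤ (S₂ : Set (E → ℤ)) :=
        Submodule.subset_span (by rw [hS₂def, Finset.coe_insert]; exact Set.mem_insert _ _)
      exact hynot (h2 (hspan hy2))
    have hC2 : 2 ≤ |C.det| := by
      rcases lt_or_ge |C.det| 2 with hlt | hge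
      · exfalso
        have hnn : 0 ≤ |C.det| := abs_nonneg _
        have hne0 : |C.det| ≠ 0 := abs_ne_zero.2 hCne
        have h1 : |C.det| = 1 := by omega
        rcases abs_eq (by norm_num : (0:ℤ) ≤ 1) |>.1 h1 with h | h
        · exact hCnotunit (Int.isUnit_iff.2 (Or.inl h))
        · exact hCnotunit (Int.isUnit_iff.2 (Or.inr h))
      · exact hge
    refine ⟨S₂, b₂, Finset.subset_insert y S, hS₂Y, hTS₂, hcard2, hdet₂ne, ?_⟩
    calc 2 * |(Matrix.of fun i j => ((b₂ j : E → ℤ)) (J i)).det|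
        ≤ |C.det| * |(Matrix.of fun i j => ((b₂ j : E → ℤ)) (J i)).det| := by
          have := abs_nonneg (Matrix.of fun i j => ((b₂ j : E → ℤ)) (J i)).det
          nlinarith
      _ = |(Matrix.of fun i j => ((b j : E → ℤ)) (J i)).det| := by
          rw [hdetfac, abs_mul]
          ring
  -- the growth induction
  have grow : ∀ (k : ℕ) (S : Finset (E → ℤ)), (S : Set (E → ℤ)) ⊆ Y → T ⊆ S →
      ∀ (b : Module.Basis (Fin r) ℤ (Submodule.span ℤ (S : Set (E → ℤ)))),
      |(Matrix.of fun i j => ((b j : E → ℤ)) (J i)).det| ≤ 2 ^ k →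
      ∃ S' : Finset (E → ℤ), S ⊆ S' ∧ (S' : Set (E → ℤ)) ⊆ Y ∧ S'.card ≤ S.card + k ∧
        Submodule.span ℤ (S' : Set (E → ℤ)) = Submodule.span ℤ Y := by
    intro k
    induction k with
    | zero =>
      intro S hSY hTS b hb
      by_cases hsub : Y ⊆ (Submodule.span ℤ (S : Set (E → ℤ)) : Set (E → ℤ))
      · exact ⟨S, subset_rfl, hSY, by omega, hdone S hSY hsub⟩
      · exfalso
        obtain ⟨S₂, b₂, -, -, -, -, hdne, hle⟩ := step S hSY hTS b hsub
        have h1 : (1:ℤ) ≤ |(Matrix.of fun i j => ((b₂ j : E → ℤ)) (J i)).det| :=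
          Int.one_le_abs hdne
        have h2 := le_trans hle hb
        simp only [pow_zero] at h2
        linarith
    | succ k ih =>
      intro S hSY hTS b hb
      by_cases hsub : Y ⊆ (Submodule.span ℤ (S : Set (E → ℤ)) : Set (E → ℤ))
      · exact ⟨S, subset_rfl, hSY, by omega, hdone S hSY hsub⟩
      · obtain ⟨S₂, b₂, hSS₂, hS₂Y, hTS₂, hcard₂, hdne, hle⟩ := step S hSY hTS b hsub
        have hb₂ : |(Matrix.of fun i j => ((b₂ j : E → ℤ)) (J i)).det| ≤ 2 ^ k := by
          have h2 := le_trans hle hb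
          have h3 : (2:ℤ) ^ (k+1) = 2 * 2 ^ k := by ring
          rw [h3] at h2
          linarith
        obtain ⟨S', h1, h2, h3, h4⟩ := ih S₂ hS₂Y hTS₂ b₂ hb₂
        exact ⟨S', hSS₂.trans h1, h2, by omega, h4⟩
  -- conclude
  have hfact : (m : ℕ).factorial ≤ 2 ^ (m * (m - 2)) := by
    obtain ⟨a, rfl⟩ := Nat.exists_eq_add_of_le hm
    have h5 : (3 + a) - 2 = a + 1 := by omega
    have h6 : (3 + a) * ((3 + a) - 2) = (a + 3) * (a + 1) := by rw [h5]; ring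
    rw [h6, show 3 + a = a + 3 by ring]
    exact factorial_le_two_pow a
  have hbound : |A.det| ≤ (2:ℤ) ^ (m * (m - 2)) := by
    calc |A.det| ≤ (r.factorial : ℤ) := hdetAle
      _ ≤ (m.factorial : ℤ) := by exact_mod_cast Nat.factorial_le hrm
      _ ≤ (2:ℤ) ^ (m * (m - 2)) := by exact_mod_cast hfact
  obtain ⟨S', hTS', hS'Y, hcard', hspan'⟩ := grow (m * (m - 2)) T hTY subset_rfl bT
    (by rw [hMatbT]; exact hbound)
  refine ⟨S', hS'Y, ?_, hspan'⟩
  have hmm : m * (m - 2) + m + m = m * m := by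
    have h2 : m - 2 + 2 = m := by omega
    calc m * (m - 2) + m + m = m * (m - 2) + m * 2 := by ring
      _ = m * ((m - 2) + 2) := by ring
      _ = m * m := by rw [h2]
  have hrT : T.card = r := rfl
  omega


section Graph


variable {n : ℕ}
set_option linter.unusedSectionVars false
set_option maxHeartbeats 1000000

/-- Non-diagonal unordered pairs: the potential edges on `Fin n`. -/
abbrev ES (n : ℕ) := {e : Sym2 (Fin n) // ¬ e.IsDiag}

/-- The signed incidence vector of a single traversal from `a` to `b`. -/
def dvec (a b : Fin n) : ES n → ℤ := fun e =>
  if e.1 = s(a, b) then (if a < b then 1 else if b < a then -1 else 0) else 0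

lemma dvec_self (a : Fin n) : dvec a a = 0 := by
  funext e
  simp only [dvec]
  split_ifs with h1 h2 h3 <;> first | rfl | omega

/-- The signed incidence vector of a walk. -/
def chi {G : SimpleGraph (Fin n)} {u v : Fin n} (w : G.Walk u v) : ES n → ℤ :=
  (w.darts.map fun d => dvec d.fst d.snd).sum

/-- The signed incidence vector associated to a permutation. -/
def permVec (π : Equiv.Perm (Fin n)) : ES n → ℤ := ∑ v : Fin n, dvec v (π v)

section phi

variable {Γ : Type} [CommGroup Γ]

/-- The product of the labels prescribed by an integer vector. -/
def phi (γ : Sym2 (Fin n) → Γ) (x : ES n → ℤ) : Γ := ∏ e : ES n, γ e.1 ^ (x e)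

lemma phi_add (γ : Sym2 (Fin n) → Γ) (x y : ES n → ℤ) :
    phi γ (x + y) = phi γ x * phi γ y := by
  rw [phi, phi, phi, ← Finset.prod_mul_distrib]
  exact Finset.prod_congr rfl fun e _ => by rw [Pi.add_apply, zpow_add]

lemma phi_zero (γ : Sym2 (Fin n) → Γ) : phi γ (0 : ES n → ℤ) = 1 := by
  rw [phi]
  exact Finset.prod_eq_one fun e _ => by simp

lemma phi_smul (γ : Sym2 (Fin n) → Γ) (c : ℤ) (x : ES n → ℤ) :
    phi γ (c • x) = (phi γ x) ^ c := by
  rw [phi, phi, ← Finset.prod_zpow]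
  exact Finset.prod_congr rfl fun e _ => by
    rw [Pi.smul_apply, smul_eq_mul, mul_comm, zpow_mul]

/-- The kernel of `phi γ` as a `ℤ`-submodule. -/
def kerPhi (γ : Sym2 (Fin n) → Γ) : Submodule ℤ (ES n → ℤ) where
  carrier := {x | phi γ x = 1}
  add_mem' := by
    intro a b ha hb
    simp only [Set.mem_setOf_eq] at *
    rw [phi_add, ha, hb, one_mul]
  zero_mem' := phi_zero γ
  smul_mem' := by
    intro c x hx
    simp only [Set.mem_setOf_eq] at *
    rw [phi_smul, hx, one_zpow]

lemma phi_dvec (γ : Sym2 (Fin n) → Γ) {a b : Fin n} (hab : a ≠ b) :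
    phi γ (dvec a b) = if a < b then γ s(a, b) else (γ s(a, b))⁻¹ := by
  have hnd : ¬ (s(a, b) : Sym2 (Fin n)).IsDiag := by
    rw [Sym2.mk_isDiag_iff]
    exact hab
  rw [phi, Finset.prod_eq_single (⟨s(a, b), hnd⟩ : ES n)]
  · by_cases h : a < b
    · simp [dvec, h]
    · have hba : b < a := by omega
      simp [dvec, h, hba]
  · intro e _ hne
    have he : e.1 ≠ s(a, b) := fun h => hne (Subtype.ext h)
    simp [dvec, he]
  · intro h
    exact absurd (Finset.mem_univ _) h

/-- The walk label product is `phi` applied to the signed incidence vector. -/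
lemma walkLabelProd_eq_phi (γ : Sym2 (Fin n) → Γ) {G : SimpleGraph (Fin n)} {u v : Fin n}
    (w : G.Walk u v) : walkLabelProd γ w = phi γ (chi w) := by
  induction w with
  | nil => simp [walkLabelProd, chi, phi_zero]
  | @cons a b c h p ih =>
    rw [walkLabelProd, Walk.darts_cons, List.map_cons, List.prod_cons]
    have hchi : chi (Walk.cons h p) = dvec a b + chi p := by
      rw [chi, Walk.darts_cons, List.map_cons, List.sum_cons]
      rfl
    rw [hchi, phi_add, phi_dvec γ h.ne, ← ih]
    rfl

end phi

lemma chi_eq_zero_of_not_mem {G : SimpleGraph (Fin n)} {u v : Fin n} (w : G.Walk u v)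
    (e : ES n) (he : e.1 ∉ w.edges) : chi w e = 0 := by
  induction w with
  | nil => simp [chi]
  | @cons a b c h p ih =>
    rw [Walk.edges_cons, List.mem_cons] at he
    push_neg at he
    have h1 : chi (Walk.cons h p) e = dvec a b e + chi p e := by
      rw [chi, Walk.darts_cons, List.map_cons, List.sum_cons]
      rfl
    rw [h1, ih he.2]
    have h2 : dvec a b e = 0 := by
      simp only [dvec]
      rw [if_neg he.1]
    rw [h2, zero_add]

lemma chi_sign {G : SimpleGraph (Fin n)} {u v : Fin n} (w : G.Walk u v) (hw : w.IsTrail)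
    (e : ES n) : chi w e = -1 ∨ chi w e = 0 ∨ chi w e = 1 := by
  induction w with
  | nil => right; left; simp [chi]
  | @cons a b c h p ih =>
    have hnd := hw.edges_nodup
    rw [Walk.edges_cons, List.nodup_cons] at hnd
    have h1 : chi (Walk.cons h p) e = dvec a b e + chi p e := by
      rw [chi, Walk.darts_cons, List.map_cons, List.sum_cons]
      rfl
    by_cases hmem : e.1 = s(a, b)
    · have hp0 : chi p e = 0 := chi_eq_zero_of_not_mem p e (by rw [hmem]; exact hnd.1)
      rw [h1, hp0, add_zero]
      have hab : a ≠ b := h.ne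
      simp only [dvec, if_pos hmem]
      by_cases hlt : a < b
      · right; right; rw [if_pos hlt]
      · have hba : b < a := by omega
        left; rw [if_neg hlt, if_pos hba]
    · have h2 : dvec a b e = 0 := by
        simp only [dvec]
        rw [if_neg hmem]
      rw [h1, h2, zero_add]
      exact ih hw.of_cons

lemma darts_zip {G : SimpleGraph (Fin n)} {u v : Fin n} (w : G.Walk u v) :
    w.darts.map (fun d => (d.fst, d.snd)) = w.support.zip w.support.tail := by
  induction w with
  | nil => simp
  | @cons a b c h p ih =>
    rw [Walk.darts_cons, List.map_cons, ih, Walk.support_cons]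
    rw [List.tail_cons]
    conv_rhs => rw [p.support_eq_cons]
    rw [List.zip_cons_cons, ← p.support_eq_cons]

/-- The cyclic-successor pairs of a nodup list, via `formPerm`. -/
lemma map_formPerm_eq {α : Type*} [DecidableEq α] (l : List α) (hnd : l.Nodup) (hne : l ≠ []) :
    l.map (fun x => (x, l.formPerm x))
      = (l.zip l.tail) ++ [(l.getLast hne, l.head hne)] := by
  have hpos : 0 < l.length := List.length_pos_iff.2 hne
  apply List.ext_getElem
  · rw [List.length_map, List.length_append, List.length_zip, List.length_tail]
    simp only [List.length_singleton]
    omega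
  · intro i h1 h2
    rw [List.getElem_map]
    have hlen : (l.zip l.tail).length = l.length - 1 := by
      rw [List.length_zip, List.length_tail]
      omega
    rw [List.length_map] at h1
    by_cases hi : i + 1 < l.length
    · have hi' : i < (l.zip l.tail).length := by omega
      rw [List.getElem_append_left hi']
      rw [List.getElem_zip, List.getElem_tail]
      rw [List.formPerm_apply_getElem l hnd i h1]
      have hmod : (i + 1) % l.length = i + 1 := Nat.mod_eq_of_lt hi
      simp only [hmod]
    · have hi' : i = l.length - 1 := by omega
      subst hi'
      have hge : (l.zip l.tail).length ≤ l.length - 1 := by omega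
      rw [List.getElem_append_right hge]
      simp only [List.getElem_singleton]
      rw [List.formPerm_apply_getElem l hnd _ h1]
      have h4 : (l.length - 1 + 1) % l.length = 0 := by
        have h5 : l.length - 1 + 1 = l.length := by omega
        rw [h5, Nat.mod_self]
      simp only [h4]
      rw [List.getLast_eq_getElem, List.head_eq_getElem_zero]

/-- Every cycle walk's incidence vector is realized by a permutation. -/
lemma exists_perm_of_cycle {G : SimpleGraph (Fin n)} {u : Fin n} (w : G.Walk u u)
    (hw : w.IsCycle) : ∃ π : Equiv.Perm (Fin n), permVec π = chi w := by
  classical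
  set l : List (Fin n) := w.support.tail with hl
  have hnd : l.Nodup := hw.support_nodup
  have hlen : l.length = w.length := by
    rw [hl, List.length_tail, Walk.length_support]
    omega
  have hne : l ≠ [] := by
    have h3 := hw.three_le_length
    intro h0
    rw [h0] at hlen
    simp at hlen
    omega
  have hsupp : w.support = u :: l := w.support_eq_cons
  have getLast_congr : ∀ (l1 l2 : List (Fin n)) (h1 : l1 ≠ []) (h2 : l2 ≠ []),
      l1 = l2 → l1.getLast h1 = l2.getLast h2 := by
    intro l1 l2 h1 h2 h
    subst h
    rfl
  have hlast : l.getLast hne = u := by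
    have h1 : w.support ≠ [] := by rw [hsupp]; exact List.cons_ne_nil _ _
    have h2 := getLast_congr w.support (u :: l) h1 (List.cons_ne_nil _ _) hsupp
    rw [List.getLast_cons hne] at h2
    rw [← h2]
    exact w.getLast_support
  refine ⟨l.formPerm, ?_⟩
  -- turn chi into a sum over the zipped pairs
  have hchi : chi w = ((w.support.zip w.support.tail).map (fun p => dvec p.1 p.2)).sum := by
    rw [chi, ← darts_zip, List.map_map]
    rfl
  obtain ⟨x, t, hxt⟩ := List.exists_cons_of_ne_nil hne
  have hhead : l.head hne = x := by
    have head_congr : ∀ (l1 l2 : List (Fin n)) (h1 : l1 ≠ []) (h2 : l2 ≠ []),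
        l1 = l2 → l1.head h1 = l2.head h2 := by
      intro l1 l2 h1 h2 h
      subst h
      rfl
    exact head_congr l (x :: t) hne (List.cons_ne_nil _ _) hxt
  have hzip : w.support.zip w.support.tail = (u, x) :: (l.zip l.tail) := by
    rw [hsupp, List.tail_cons, hxt, List.zip_cons_cons, List.tail_cons]
  -- the permutation side
  have hfix : ∀ v : Fin n, v ∉ l → dvec v (l.formPerm v) = 0 := by
    intro v hv
    rw [List.formPerm_apply_of_notMem hv]
    exact dvec_self v
  have hsum1 : permVec l.formPerm = ∑ v ∈ l.toFinset, dvec v (l.formPerm v) := by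
    rw [permVec]
    symm
    apply Finset.sum_subset (Finset.subset_univ _)
    intro v _ hv
    exact hfix v (by simpa using hv)
  have hsum2 : (∑ v ∈ l.toFinset, dvec v (l.formPerm v))
      = (l.map (fun x => dvec x (l.formPerm x))).sum := List.sum_toFinset _ hnd
  have hsum3 : (l.map (fun x => dvec x (l.formPerm x))).sum
      = ((l.map (fun x => (x, l.formPerm x))).map (fun p => dvec p.1 p.2)).sum := by
    rw [List.map_map]
    rfl
  rw [hsum1, hsum2, hsum3, map_formPerm_eq l hnd hne, hchi, hzip]
  rw [List.map_append, List.sum_append, List.map_cons, List.sum_cons]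
  simp only [List.map_cons, List.map_nil, List.sum_cons, List.sum_nil, add_zero]
  rw [hlast, hhead]
  exact add_comm _ _



end Graph

section Assembly

variable {n : ℕ}

/-- The set of vectors encoded by a tuple of optional permutations. -/
def decodeSet (N : ℕ) (f : Fin N → Option (Equiv.Perm (Fin n))) : Set (ES n → ℤ) :=
  {x | ∃ (i : Fin N) (π : Equiv.Perm (Fin n)), f i = some π ∧ x = permVec π}

/-- The set of cycle subgraphs recovered from an encoding. -/
def Bset (G : SimpleGraph (Fin n)) (N : ℕ) (f : Fin N → Option (Equiv.Perm (Fin n))) :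
    Set G.Subgraph :=
  {C | IsCycleSubgraph G C ∧ ∃ (u : Fin n) (w : G.Walk u u), w.IsCycle ∧ w.toSubgraph = C ∧
    chi w ∈ Submodule.span ℤ (decodeSet N f)}

lemma exists_encoding (hn : 3 ≤ n) {G : SimpleGraph (Fin n)} {B : Set G.Subgraph}
    (h : ArisesFromAbelianLabelling G B) :
    ∃ f : Fin (n.choose 2 * n.choose 2 - n.choose 2) → Option (Equiv.Perm (Fin n)),
      B = Bset G (n.choose 2 * n.choose 2 - n.choose 2) f := by
  classical
  obtain ⟨Γ, instΓ, γ, hB⟩ := h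
  set m : ℕ := n.choose 2 with hm
  have hm3 : 3 ≤ m := by
    have h1 : Nat.choose 3 2 ≤ Nat.choose n 2 := Nat.choose_le_choose 2 hn
    simpa using h1
  have hEcard : Fintype.card (ES n) = m := by
    rw [hm]
    have h2 := Sym2.card_subtype_not_diag (α := Fin n)
    rwa [Fintype.card_fin] at h2
  set Y : Set (ES n → ℤ) :=
    {x | (∃ (u : Fin n) (w : G.Walk u u), w.IsCycle ∧ chi w = x) ∧ x ∈ kerPhi γ} with hY
  have hYsign : ∀ y ∈ Y, ∀ e : ES n, y e = -1 ∨ y e = 0 ∨ y e = 1 := by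
    rintro y ⟨⟨u, w, hwc, rfl⟩, -⟩ e
    exact chi_sign w hwc.isCircuit.isTrail e
  obtain ⟨S, hSY, hScard, hSspan⟩ := exists_small_generating hm3 hEcard Y hYsign
  have hperm : ∀ y ∈ S, ∃ π : Equiv.Perm (Fin n), permVec π = y := by
    intro y hy
    obtain ⟨⟨u, w, hwc, hchi⟩, -⟩ := hSY hy
    obtain ⟨π, hπ⟩ := exists_perm_of_cycle w hwc
    exact ⟨π, by rw [hπ, hchi]⟩
  have hlen : S.toList.length ≤ m * m - m := by
    rw [Finset.length_toList]
    exact hScard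
  set pick : (i : ℕ) → i < S.toList.length → Equiv.Perm (Fin n) := fun i h =>
    Classical.choose (hperm (S.toList.get ⟨i, h⟩)
      (Finset.mem_toList.1 (List.get_mem _ _))) with hpick
  have hpickspec : ∀ (i : ℕ) (h : i < S.toList.length),
      permVec (pick i h) = S.toList.get ⟨i, h⟩ := fun i h =>
    Classical.choose_spec (hperm (S.toList.get ⟨i, h⟩)
      (Finset.mem_toList.1 (List.get_mem _ _)))
  set f : Fin (m * m - m) → Option (Equiv.Perm (Fin n)) := fun i =>
    if h : (i : ℕ) < S.toList.length then some (pick i h) else none with hf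
  have hdec : decodeSet (m * m - m) f = (S : Set (ES n → ℤ)) := by
    apply Set.Subset.antisymm
    · rintro x ⟨i, π, hfi, rfl⟩
      simp only [hf] at hfi
      by_cases h : (i : ℕ) < S.toList.length
      · rw [dif_pos h] at hfi
        have : π = pick i h := (Option.some.inj hfi).symm
        rw [this, hpickspec]
        exact Finset.mem_coe.2 (Finset.mem_toList.1 (List.get_mem _ _))
      · rw [dif_neg h] at hfi
        exact absurd hfi (by simp)
    · intro y hy
      have hyS : y ∈ S.toList := Finset.mem_toList.2 (Finset.mem_coe.1 hy)
      obtain ⟨i, hi, hget⟩ := List.mem_iff_getElem.1 hyS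
      refine ⟨⟨i, lt_of_lt_of_le hi hlen⟩, pick i hi, ?_, ?_⟩
      · simp only [hf]
        exact dif_pos hi
      · rw [hpickspec i hi]
        simp [hget]
  refine ⟨f, ?_⟩
  rw [hB]
  apply Set.Subset.antisymm
  · rintro C ⟨hcyc, u, w, hwc, hws, hprod⟩
    refine ⟨hcyc, u, w, hwc, hws, ?_⟩
    rw [hdec, hSspan]
    apply Submodule.subset_span
    refine ⟨⟨u, w, hwc, rfl⟩, ?_⟩
    show phi γ (chi w) = 1
    rw [← walkLabelProd_eq_phi]
    exact hprod
  · rintro C ⟨hcyc, u, w, hwc, hws, hmem⟩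
    rw [hdec, hSspan] at hmem
    have hker : Submodule.span ℤ Y ≤ kerPhi γ := by
      rw [Submodule.span_le]
      rintro x ⟨-, hx⟩
      exact hx
    have hphi : phi γ (chi w) = 1 := hker hmem
    refine ⟨hcyc, u, w, hwc, hws, ?_⟩
    rw [walkLabelProd_eq_phi]
    exact hphi

end Assembly

end ALC

/-- For each `n ≥ 3`, the number of simple biased graphs with vertex set `[n]` arising
from an abelian-group-labelling is at most `(2 n! + 1) ^ (C(n,2)²)`. -/
theorem abelianLabellableCount_le (n : ℕ) (hn : 3 ≤ n) :
    abelianLabellableCount n ≤ (2 * n.factorial + 1) ^ (n.choose 2 ^ 2) := by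
  classical
  set m : ℕ := n.choose 2 with hm
  have hm3 : 3 ≤ m := by
    have h1 : Nat.choose 3 2 ≤ Nat.choose n 2 := Nat.choose_le_choose 2 hn
    simpa using h1
  set N : ℕ := m * m - m with hN
  have hencode : ∀ p : {p : Σ G : SimpleGraph (Fin n), Set G.Subgraph //
      IsBiasedGraph p.1 p.2 ∧ ArisesFromAbelianLabelling p.1 p.2},
      ∃ f : Fin N → Option (Equiv.Perm (Fin n)), p.1.2 = ALC.Bset p.1.1 N f :=
    fun p => ALC.exists_encoding hn p.2.2
  set enc : {p : Σ G : SimpleGraph (Fin n), Set G.Subgraph //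
      IsBiasedGraph p.1 p.2 ∧ ArisesFromAbelianLabelling p.1 p.2} →
      (ALC.ES n → Prop) × (Fin N → Option (Equiv.Perm (Fin n))) :=
    fun p => (fun e => e.1 ∈ p.1.1.edgeSet, Classical.choose (hencode p)) with henc
  have hinj : Function.Injective enc := by
    rintro ⟨⟨Gp, Bp⟩, hp⟩ ⟨⟨Gq, Bq⟩, hq⟩ h
    have hG : Gp = Gq := by
      ext a b
      by_cases hab : a = b
      · subst hab
        simp
      · have hnd : ¬ (s(a, b) : Sym2 (Fin n)).IsDiag := by
          rw [Sym2.mk_isDiag_iff]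
          exact hab
        have h2 := congrFun (congrArg Prod.fst h) ⟨s(a, b), hnd⟩
        rw [← SimpleGraph.mem_edgeSet, ← SimpleGraph.mem_edgeSet]
        exact iff_of_eq h2
    subst hG
    have hB : Bp = Bq := by
      have e1 : Bp = ALC.Bset Gp N (Classical.choose (hencode ⟨⟨Gp, Bp⟩, hp⟩)) :=
        Classical.choose_spec (hencode ⟨⟨Gp, Bp⟩, hp⟩)
      have e2 : Bq = ALC.Bset Gp N (Classical.choose (hencode ⟨⟨Gp, Bq⟩, hq⟩)) :=
        Classical.choose_spec (hencode ⟨⟨Gp, Bq⟩, hq⟩)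
      have h3 : Classical.choose (hencode ⟨⟨Gp, Bp⟩, hp⟩)
          = Classical.choose (hencode ⟨⟨Gp, Bq⟩, hq⟩) := congrArg Prod.snd h
      rw [e1, e2, h3]
    subst hB
    rfl
  have hcount := Nat.card_le_card_of_injective enc hinj
  unfold abelianLabellableCount
  refine le_trans hcount ?_
  rw [Nat.card_eq_fintype_card]
  rw [Fintype.card_prod, Fintype.card_fun, Fintype.card_fun, Fintype.card_prop,
    Fintype.card_option, Fintype.card_perm, Fintype.card_fin, Fintype.card_fin]
  have hES : Fintype.card (ALC.ES n) = m := by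
    rw [hm]
    have h2 := Sym2.card_subtype_not_diag (α := Fin n)
    rwa [Fintype.card_fin] at h2
  rw [hES]
  have hfac := n.factorial_pos
  have h1 : (2:ℕ) ≤ 2 * n.factorial + 1 := by omega
  have h2 : n.factorial + 1 ≤ 2 * n.factorial + 1 := by omega
  have hsq : n.choose 2 ^ 2 = m * m := by rw [hm, pow_two]
  calc 2 ^ m * (n.factorial + 1) ^ N
      ≤ (2 * n.factorial + 1) ^ m * (2 * n.factorial + 1) ^ N :=
        Nat.mul_le_mul (Nat.pow_le_pow_left h1 m) (Nat.pow_le_pow_left h2 N)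
    _ = (2 * n.factorial + 1) ^ (m + N) := (pow_add _ m N).symm
    _ = (2 * n.factorial + 1) ^ (n.choose 2 ^ 2) := by
        congr 1
        have hmm : m ≤ m * m := Nat.le_mul_of_pos_left m (by omega)
        rw [hsq, hN]
        omega
end
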